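/- arXiv:1202.3642 — 7 statements merged into one kernel-verified Lean document; each statement's English description precedes it below -/
import Mathlib

section
/- Let G be a connected simple graph with countable vertex set, let d be its graph distance, let A be a bounded self-adjoint operator on ℓ²(G) with matrix elements A(x,y) := ⟨δ_x, A δ_y⟩, and let V : G → ℝ be a bounded function acting on ℓ²(G) as the multiplication operator; set H = A + V. Suppose there exists α > 0 with g_A(α) := sup_x Σ_y |A(x,y)| e^{α d(x,y)} < ∞. Then for every β > 0 and every vertex u there exists a constant C < ∞ (depending only on β, α and g_A(α)) such that for all η ∈ (0,1]: Σ_x d(x,u)^β · 2η ∫₀^∞ e^{-2ηt} |⟨δ_x, e^{-itH} δ_u⟩|² dt ≤ C · η^{-β}. -/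
open MeasureTheory Complex
open scoped ENNReal NNReal

section aux
set_option linter.unusedSectionVars false

lemma enorm_tsum_le {ι F : Type*} [NormedAddCommGroup F] {f : ι → F} {s : F} (h : HasSum f s) :
    (‖s‖₊ : ℝ≥0∞) ≤ ∑' i, (‖f i‖₊ : ℝ≥0∞) := by
  by_cases hfin : ∑' i, (‖f i‖₊ : ℝ≥0∞) = ⊤
  · simp [hfin]
  · have hsumm : Summable fun i => ‖f i‖₊ := by
      rwa [← ENNReal.tsum_coe_ne_top_iff_summable]
    have h1 : ‖s‖₊ ≤ ∑' i, ‖f i‖₊ := by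
      rw [← h.tsum_eq]
      exact nnnorm_tsum_le hsumm
    rw [← ENNReal.coe_tsum hsumm]
    exact_mod_cast h1

variable {V : Type*} [Countable V] [DecidableEq V]

noncomputable def dl (x : V) : lp (fun _ : V => ℂ) 2 := lp.single 2 x (1 : ℂ)

noncomputable def eps (r : ℝ) : ℝ≥0∞ := ENNReal.ofReal (Real.exp r)

lemma eps_add (a b : ℝ) : eps (a + b) = eps a * eps b := by
  rw [eps, eps, eps, Real.exp_add, ENNReal.ofReal_mul (Real.exp_nonneg a)]

lemma eps_mono {a b : ℝ} (h : a ≤ b) : eps a ≤ eps b :=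
  ENNReal.ofReal_le_ofReal (Real.exp_le_exp.2 h)

lemma inner_dl_apply (x : V) (f : lp (fun _ : V => ℂ) 2) :
    (inner ℂ (dl x) f : ℂ) = f x := by
  rw [dl, lp.inner_single_left]
  simp [RCLike.inner_apply]

lemma apply_hasSum (T : lp (fun _ : V => ℂ) 2 →L[ℂ] lp (fun _ : V => ℂ) 2)
    (ψ : lp (fun _ : V => ℂ) 2) (x : V) :
    HasSum (fun y => ψ y * (T (dl y)) x) ((T ψ) x) := by
  have h0 : HasSum (fun y : V => lp.single 2 y (ψ y)) ψ := lp.hasSum_single (by norm_num) ψ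
  have h1 : HasSum (fun y : V => T (lp.single 2 y (ψ y))) (T ψ) := h0.mapL T
  have h2 := h1.mapL (innerSL ℂ (dl x))
  have h3 : ∀ y : V, (innerSL ℂ (dl x)) (T (lp.single 2 y (ψ y))) = ψ y * (T (dl y)) x := by
    intro y
    have : lp.single 2 y (ψ y) = ψ y • dl y := by
      rw [dl, ← lp.single_smul]
      norm_num
    rw [this, _root_.map_smul, innerSL_apply_apply, inner_dl_apply]
    simp
  have h4 : (innerSL ℂ (dl x)) (T ψ) = (T ψ) x := inner_dl_apply x (T ψ)
  rw [← h4]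
  exact h2.congr_fun fun y => (h3 y).symm

variable {H : lp (fun _ : V => ℂ) 2 →L[ℂ] lp (fun _ : V => ℂ) 2}

lemma matrix_symm_of_sa (hH : IsSelfAdjoint H) (x y : V) : (‖(H (dl y)) x‖₊ : ℝ≥0) = ‖(H (dl x)) y‖₊ := by
  have h1 : (H (dl y)) x = inner ℂ (dl x) (H (dl y)) := (inner_dl_apply x _).symm
  have h2 : (inner ℂ (dl x) (H (dl y)) : ℂ) = inner ℂ (H (dl x)) (dl y) := by
    rw [← ContinuousLinearMap.adjoint_inner_left, hH.adjoint_eq]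
  have h3 : (inner ℂ (H (dl x)) (dl y) : ℂ) = starRingEnd ℂ (inner ℂ (dl y) (H (dl x))) :=
    (inner_conj_symm _ _).symm
  rw [h1, h2, h3]
  rw [inner_dl_apply]
  simp [nnnorm_star]

lemma col_bound (hH : IsSelfAdjoint H) {G : SimpleGraph V} {α : ℝ} {S : ℝ≥0∞}
    (hrow : ∀ x : V, ∑' y : V, (‖(H (dl y)) x‖₊ : ℝ≥0∞) * eps (α * G.dist x y) ≤ S) (y : V) :
    ∑' x : V, (‖(H (dl y)) x‖₊ : ℝ≥0∞) * eps (α * G.dist x y) ≤ S := by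
  calc ∑' x : V, (‖(H (dl y)) x‖₊ : ℝ≥0∞) * eps (α * G.dist x y)
      = ∑' x : V, (‖(H (dl x)) y‖₊ : ℝ≥0∞) * eps (α * G.dist y x) := by
        refine tsum_congr fun x => ?_
        rw [matrix_symm_of_sa hH, SimpleGraph.dist_comm]
    _ ≤ S := hrow y

lemma pow_row_bound (hH : IsSelfAdjoint H) {G : SimpleGraph V} (hG : G.Connected)
    {α : ℝ} (hα : 0 < α) {S : ℝ≥0∞}
    (hrow : ∀ x : V, ∑' y : V, (‖(H (dl y)) x‖₊ : ℝ≥0∞) * eps (α * G.dist x y) ≤ S)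
    (u : V) : ∀ n : ℕ,
    ∑' x : V, (‖((H ^ n) (dl u)) x‖₊ : ℝ≥0∞) * eps (α * G.dist x u) ≤ S ^ n := by
  intro n
  induction n with
  | zero =>
    rw [pow_zero, pow_zero]
    rw [show ((1 : lp (fun _ : V => ℂ) 2 →L[ℂ] lp (fun _ : V => ℂ) 2) (dl u)) = dl u from rfl]
    rw [tsum_eq_single u ?_]
    · rw [dl, lp.single_apply_self, SimpleGraph.dist_self]
      norm_num [eps]
    · intro x hx
      rw [dl, lp.single_apply_ne 2 u _ hx]
      simp
  | succ n ih =>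
    set ψ := (H ^ n) (dl u) with hψ
    have happ : ∀ x : V, ((H ^ (n+1)) (dl u)) x = (H ψ) x := by
      intro x
      rw [pow_succ']
      rfl
    have hterm : ∀ x : V, (‖((H ^ (n+1)) (dl u)) x‖₊ : ℝ≥0∞) ≤
        ∑' y : V, (‖ψ y‖₊ : ℝ≥0∞) * ‖(H (dl y)) x‖₊ := by
      intro x
      rw [happ x]
      refine (enorm_tsum_le (apply_hasSum H ψ x)).trans_eq ?_
      refine tsum_congr fun y => ?_
      rw [nnnorm_mul, ENNReal.coe_mul]
    calc ∑' x : V, (‖((H ^ (n+1)) (dl u)) x‖₊ : ℝ≥0∞) * eps (α * G.dist x u)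
        ≤ ∑' x : V, (∑' y : V, (‖ψ y‖₊ : ℝ≥0∞) * ‖(H (dl y)) x‖₊) * eps (α * G.dist x u) := by
          exact ENNReal.tsum_le_tsum fun x => mul_le_mul_left (hterm x) _
      _ = ∑' x : V, ∑' y : V, (‖ψ y‖₊ : ℝ≥0∞) * ‖(H (dl y)) x‖₊ * eps (α * G.dist x u) := by
          refine tsum_congr fun x => ?_
          rw [ENNReal.tsum_mul_right]
      _ ≤ ∑' x : V, ∑' y : V, ((‖ψ y‖₊ : ℝ≥0∞) * eps (α * G.dist y u)) *
            ((‖(H (dl y)) x‖₊ : ℝ≥0∞) * eps (α * G.dist x y)) := by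
          refine ENNReal.tsum_le_tsum fun x => ENNReal.tsum_le_tsum fun y => ?_
          have htri : (G.dist x u : ℝ) ≤ (G.dist x y : ℝ) + (G.dist y u : ℝ) := by
            exact_mod_cast hG.dist_triangle
          have : eps (α * G.dist x u) ≤ eps (α * G.dist x y) * eps (α * G.dist y u) := by
            rw [← eps_add]
            refine eps_mono ?_
            rw [← mul_add]
            exact mul_le_mul_of_nonneg_left htri hα.le
          calc (‖ψ y‖₊ : ℝ≥0∞) * ‖(H (dl y)) x‖₊ * eps (α * G.dist x u)
              ≤ (‖ψ y‖₊ : ℝ≥0∞) * ‖(H (dl y)) x‖₊ *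
                (eps (α * G.dist x y) * eps (α * G.dist y u)) := by
                exact mul_le_mul_right this _
            _ = ((‖ψ y‖₊ : ℝ≥0∞) * eps (α * G.dist y u)) *
                ((‖(H (dl y)) x‖₊ : ℝ≥0∞) * eps (α * G.dist x y)) := by ring
      _ = ∑' y : V, ((‖ψ y‖₊ : ℝ≥0∞) * eps (α * G.dist y u)) *
            ∑' x : V, ((‖(H (dl y)) x‖₊ : ℝ≥0∞) * eps (α * G.dist x y)) := by
          rw [ENNReal.tsum_comm]
          exact tsum_congr fun y => ENNReal.tsum_mul_left
      _ ≤ ∑' y : V, ((‖ψ y‖₊ : ℝ≥0∞) * eps (α * G.dist y u)) * S := by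
          exact ENNReal.tsum_le_tsum fun y => mul_le_mul_right (col_bound hH hrow y) _
      _ = (∑' y : V, (‖ψ y‖₊ : ℝ≥0∞) * eps (α * G.dist y u)) * S := ENNReal.tsum_mul_right
      _ ≤ S ^ n * S := mul_le_mul_left ih S
      _ = S ^ (n + 1) := (pow_succ S n).symm

noncomputable def am (H : lp (fun _ : V => ℂ) 2 →L[ℂ] lp (fun _ : V => ℂ) 2)
    (t : ℝ) (u x : V) : ℂ :=
  ((NormedSpace.exp ((-(Complex.I * (t : ℂ))) • H)) (dl u)) x

lemma am_hasSum (t : ℝ) (u x : V) :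
    HasSum (fun n : ℕ => (n.factorial⁻¹ : ℂ) * (-(Complex.I * (t : ℂ))) ^ n * ((H ^ n) (dl u)) x)
      (am H t u x) := by
  set c : ℂ := -(Complex.I * (t : ℂ)) with hc
  have h0 : HasSum (fun n : ℕ => (n.factorial⁻¹ : ℂ) • (c • H) ^ n)
      (NormedSpace.exp (c • H)) := NormedSpace.exp_series_hasSum_exp' (c • H)
  have h1 := h0.mapL (ContinuousLinearMap.apply ℂ (lp (fun _ : V => ℂ) 2) (dl u))
  have h2 := h1.mapL (innerSL ℂ (dl x))
  have h3 : ∀ n : ℕ, (innerSL ℂ (dl x))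
      ((ContinuousLinearMap.apply ℂ (lp (fun _ : V => ℂ) 2) (dl u))
        ((n.factorial⁻¹ : ℂ) • (c • H) ^ n)) =
      (n.factorial⁻¹ : ℂ) * c ^ n * ((H ^ n) (dl u)) x := by
    intro n
    rw [smul_pow]
    simp only [ContinuousLinearMap.apply_apply, ContinuousLinearMap.smul_apply, innerSL_apply_apply]
    rw [inner_smul_right, inner_smul_right, inner_dl_apply]
    ring
  have h4 : (innerSL ℂ (dl x))
      ((ContinuousLinearMap.apply ℂ (lp (fun _ : V => ℂ) 2) (dl u))
        (NormedSpace.exp (c • H))) = am H t u x := by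
    simp only [ContinuousLinearMap.apply_apply, innerSL_apply_apply]
    rw [inner_dl_apply, am]
  rw [← h4]
  exact h2.congr_fun fun n => (h3 n).symm

lemma weighted_l1_bound (hH : IsSelfAdjoint H) {G : SimpleGraph V} (hG : G.Connected)
    {α : ℝ} (hα : 0 < α) {S : ℝ≥0∞} (hS : S ≠ ⊤)
    (hrow : ∀ x : V, ∑' y : V, (‖(H (dl y)) x‖₊ : ℝ≥0∞) * eps (α * G.dist x y) ≤ S)
    (u : V) {t : ℝ} (ht : 0 ≤ t) :
    ∑' x : V, (‖am H t u x‖₊ : ℝ≥0∞) * eps (α * G.dist x u) ≤ eps (t * S.toReal) := by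
  set c : ℂ := -(Complex.I * (t : ℂ)) with hc
  have hnc : ‖c‖ = t := by
    rw [hc, norm_neg, norm_mul, Complex.norm_I, one_mul, Complex.norm_real,
      Real.norm_eq_abs, _root_.abs_of_nonneg ht]
  have hterm : ∀ x : V, (‖am H t u x‖₊ : ℝ≥0∞) ≤
      ∑' n : ℕ, ENNReal.ofReal (t ^ n / n.factorial) * ‖((H ^ n) (dl u)) x‖₊ := by
    intro x
    refine (enorm_tsum_le (am_hasSum (H := H) t u x)).trans_eq ?_
    refine tsum_congr fun n => ?_
    rw [← enorm_eq_nnnorm, ← ofReal_norm, ← enorm_eq_nnnorm, ← ofReal_norm]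
    rw [norm_mul, norm_mul, norm_pow, hnc]
    rw [show ‖(n.factorial⁻¹ : ℂ)‖ = (n.factorial : ℝ)⁻¹ by
      rw [show ((n.factorial⁻¹ : ℂ)) = ((n.factorial : ℝ)⁻¹ : ℝ) by push_cast; ring]
      rw [Complex.norm_real, Real.norm_eq_abs, _root_.abs_of_nonneg (by positivity)]]
    rw [ENNReal.ofReal_mul (by positivity)]
    congr 1
    rw [div_eq_inv_mul]
  have hs0 : (0 : ℝ) ≤ S.toReal := ENNReal.toReal_nonneg
  calc ∑' x : V, (‖am H t u x‖₊ : ℝ≥0∞) * eps (α * G.dist x u)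
      ≤ ∑' x : V, (∑' n : ℕ, ENNReal.ofReal (t ^ n / n.factorial) * ‖((H ^ n) (dl u)) x‖₊) *
          eps (α * G.dist x u) :=
        ENNReal.tsum_le_tsum fun x => mul_le_mul_left (hterm x) _
    _ = ∑' x : V, ∑' n : ℕ, ENNReal.ofReal (t ^ n / n.factorial) *
          ((‖((H ^ n) (dl u)) x‖₊ : ℝ≥0∞) * eps (α * G.dist x u)) := by
        refine tsum_congr fun x => ?_
        rw [← ENNReal.tsum_mul_right]
        exact tsum_congr fun n => mul_assoc _ _ _
    _ = ∑' n : ℕ, ∑' x : V, ENNReal.ofReal (t ^ n / n.factorial) *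
          ((‖((H ^ n) (dl u)) x‖₊ : ℝ≥0∞) * eps (α * G.dist x u)) := ENNReal.tsum_comm
    _ = ∑' n : ℕ, ENNReal.ofReal (t ^ n / n.factorial) *
          ∑' x : V, (‖((H ^ n) (dl u)) x‖₊ : ℝ≥0∞) * eps (α * G.dist x u) := by
        exact tsum_congr fun n => ENNReal.tsum_mul_left
    _ ≤ ∑' n : ℕ, ENNReal.ofReal (t ^ n / n.factorial) * S ^ n :=
        ENNReal.tsum_le_tsum fun n =>
          mul_le_mul_right (pow_row_bound hH hG hα hrow u n) _
    _ = ∑' n : ℕ, ENNReal.ofReal (t ^ n / n.factorial) * ENNReal.ofReal (S.toReal ^ n) := by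
        refine tsum_congr fun n => ?_
        congr 1
        rw [ENNReal.ofReal_pow hs0, ENNReal.ofReal_toReal hS]
    _ = ∑' n : ℕ, ENNReal.ofReal ((t * S.toReal) ^ n / n.factorial) := by
        refine tsum_congr fun n => ?_
        rw [← ENNReal.ofReal_mul (by positivity), mul_pow]
        congr 1
        ring
    _ = ENNReal.ofReal (∑' n : ℕ, (t * S.toReal) ^ n / n.factorial) :=
        (ENNReal.ofReal_tsum_of_nonneg (fun n => by positivity)
          (Real.summable_pow_div_factorial _)).symm
    _ = eps (t * S.toReal) := by
        rw [eps]
        congr 1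
        rw [Real.exp_eq_exp_ℝ, NormedSpace.exp_eq_tsum_div]

lemma norm_dl (u : V) : ‖(dl u : lp (fun _ : V => ℂ) 2)‖ = 1 := by
  have h := lp.norm_single (p := 2) (E := fun _ : V => ℂ) (by norm_num) u (1 : ℂ)
  simpa [dl] using h

lemma exp_skew_unitary (hH : IsSelfAdjoint H) (t : ℝ) (ψ : lp (fun _ : V => ℂ) 2) :
    ‖(NormedSpace.exp ((-(Complex.I * (t : ℂ))) • H)) ψ‖ = ‖ψ‖ := by
  have hskew : ((-(Complex.I * (t : ℂ))) • H) ∈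
      skewAdjoint (lp (fun _ : V => ℂ) 2 →L[ℂ] lp (fun _ : V => ℂ) 2) := by
    rw [skewAdjoint.mem_iff, star_smul, hH.star_eq]
    simp [Complex.star_def, Complex.conj_I, Complex.conj_ofReal, neg_smul]
  let +nondep : NormedAlgebra ℚ (lp (fun _ : V => ℂ) 2 →L[ℂ] lp (fun _ : V => ℂ) 2) :=
    .restrictScalars ℚ ℂ _
  have hu := NormedSpace.exp_mem_unitary_of_mem_skewAdjoint hskew
  exact ContinuousLinearMap.norm_map_of_mem_unitary hu ψ

lemma am_le_one (hH : IsSelfAdjoint H) (t : ℝ) (u x : V) : ‖am H t u x‖ ≤ 1 := by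
  rw [am]
  refine (lp.norm_apply_le_norm (p := 2) (by norm_num) _ x).trans ?_
  rw [exp_skew_unitary hH, norm_dl]

lemma am_sq_sum (hH : IsSelfAdjoint H) (t : ℝ) (u : V) :
    ∑' x : V, (‖am H t u x‖₊ : ℝ≥0∞) ^ 2 = 1 := by
  set ψ := (NormedSpace.exp ((-(Complex.I * (t : ℂ))) • H)) (dl u) with hψ
  have hnorm : ‖ψ‖ = 1 := by rw [hψ, exp_skew_unitary hH, norm_dl]
  have h2 : ((2 : ℝ≥0∞)).toReal = (2 : ℝ) := by norm_num
  have hsum : Summable fun x : V => ‖ψ x‖ ^ (2 : ℝ) := by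
    have := (lp.memℓp ψ).summable (p := 2) (by norm_num)
    rwa [h2] at this
  have hrpow : ‖ψ‖ ^ (2 : ℝ) = ∑' x : V, ‖ψ x‖ ^ (2 : ℝ) := by
    have := lp.norm_rpow_eq_tsum (p := 2) (by norm_num) ψ
    rwa [h2] at this
  calc ∑' x : V, (‖am H t u x‖₊ : ℝ≥0∞) ^ 2
      = ∑' x : V, ENNReal.ofReal (‖ψ x‖ ^ (2 : ℝ)) := by
        refine tsum_congr fun x => ?_
        rw [Real.rpow_two, ENNReal.ofReal_pow (norm_nonneg _), ofReal_norm, enorm_eq_nnnorm]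
        rfl
    _ = ENNReal.ofReal (∑' x : V, ‖ψ x‖ ^ (2 : ℝ)) :=
        (ENNReal.ofReal_tsum_of_nonneg (fun x => Real.rpow_nonneg (norm_nonneg _) _) hsum).symm
    _ = 1 := by rw [← hrpow, hnorm]; norm_num

lemma rpow_le_exp_aux {β c : ℝ} (hβ : 0 < β) (hc : 0 < c) {s : ℝ} (hs : 0 ≤ s) :
    s ^ β ≤ (β / c) ^ β * Real.exp (c * s) := by
  rcases eq_or_lt_of_le hs with h0 | h0
  · rw [← h0, Real.zero_rpow hβ.ne']
    positivity
  · have h1 : s = (β / c) * (c * s / β) := by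
      field_simp
    have h2 : s ^ β = (β / c) ^ β * (c * s / β) ^ β := by
      rw [← Real.mul_rpow (by positivity) (by positivity), ← h1]
    rw [h2]
    refine mul_le_mul_of_nonneg_left ?_ (by positivity)
    have h3 : c * s / β ≤ Real.exp (c * s / β) := by
      have := Real.add_one_le_exp (c * s / β)
      linarith
    calc (c * s / β) ^ β ≤ (Real.exp (c * s / β)) ^ β :=
          Real.rpow_le_rpow (by positivity) h3 hβ.le
      _ = Real.exp (c * s) := by
          rw [← Real.exp_mul]
          congr 1
          field_simp
      _ ≤ Real.exp (c * s) := le_refl _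

lemma moment_bound (hH : IsSelfAdjoint H) {G : SimpleGraph V} (hG : G.Connected)
    {α : ℝ} (hα : 0 < α) {S : ℝ≥0∞} (hS : S ≠ ⊤)
    (hrow : ∀ x : V, ∑' y : V, (‖(H (dl y)) x‖₊ : ℝ≥0∞) * eps (α * G.dist x y) ≤ S)
    (u : V) {β : ℝ} (hβ : 0 < β) {t : ℝ} (ht : 0 ≤ t) :
    ∑' x : V, ENNReal.ofReal ((G.dist x u : ℝ) ^ β) * (‖am H t u x‖₊ : ℝ≥0∞) ^ 2 ≤
      ENNReal.ofReal (((2 * (S.toReal + 1) / α) ^ β + (2 * β / α) ^ β) * (1 + t) ^ β) := by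
  set s := S.toReal with hs
  have hs0 : 0 ≤ s := ENNReal.toReal_nonneg
  set R : ℝ := 2 * (s * t + 1) / α with hR
  have hR0 : 0 ≤ R := by positivity
  have hkey : ∀ x : V, ENNReal.ofReal ((G.dist x u : ℝ) ^ β) * (‖am H t u x‖₊ : ℝ≥0∞) ^ 2 ≤
      ENNReal.ofReal (R ^ β) * (‖am H t u x‖₊ : ℝ≥0∞) ^ 2 +
      ENNReal.ofReal ((2 * β / α) ^ β * Real.exp (-(α * R / 2))) *
        ((‖am H t u x‖₊ : ℝ≥0∞) * eps (α * G.dist x u)) := by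
    intro x
    set d : ℝ := (G.dist x u : ℝ) with hd
    have hd0 : 0 ≤ d := by positivity
    rcases le_or_gt d R with hcase | hcase
    · refine le_add_of_le_of_nonneg ?_ zero_le
      exact mul_le_mul_left (ENNReal.ofReal_le_ofReal
        (Real.rpow_le_rpow hd0 hcase hβ.le)) _
    · refine le_add_of_nonneg_of_le zero_le ?_
      have ham1 : (‖am H t u x‖₊ : ℝ≥0∞) ≤ 1 := by
        rw [← enorm_eq_nnnorm, ← ofReal_norm]
        exact ENNReal.ofReal_le_one.2 (am_le_one hH t u x)
      have hsq : (‖am H t u x‖₊ : ℝ≥0∞) ^ 2 ≤ (‖am H t u x‖₊ : ℝ≥0∞) := by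
        rw [pow_two]
        exact mul_le_of_le_one_left zero_le ham1
      have hdb : d ^ β ≤ (2 * β / α) ^ β * Real.exp (-(α * R / 2)) * Real.exp (α * d) := by
        have h1 : d ^ β ≤ (β / (α / 2)) ^ β * Real.exp ((α / 2) * d) :=
          rpow_le_exp_aux hβ (by positivity) hd0
        have h2 : (β / (α / 2)) = 2 * β / α := by field_simp
        have h3 : Real.exp ((α / 2) * d) ≤ Real.exp (-(α * R / 2)) * Real.exp (α * d) := by
          rw [← Real.exp_add, Real.exp_le_exp]
          nlinarith [hcase]
        calc d ^ β ≤ (2 * β / α) ^ β * Real.exp ((α / 2) * d) := by rw [← h2]; exact h1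
          _ ≤ (2 * β / α) ^ β * (Real.exp (-(α * R / 2)) * Real.exp (α * d)) :=
              mul_le_mul_of_nonneg_left h3 (by positivity)
          _ = (2 * β / α) ^ β * Real.exp (-(α * R / 2)) * Real.exp (α * d) := by ring
      calc ENNReal.ofReal (d ^ β) * (‖am H t u x‖₊ : ℝ≥0∞) ^ 2
          ≤ ENNReal.ofReal (d ^ β) * (‖am H t u x‖₊ : ℝ≥0∞) :=
            mul_le_mul_right hsq _
        _ ≤ ENNReal.ofReal ((2 * β / α) ^ β * Real.exp (-(α * R / 2)) * Real.exp (α * d)) *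
              (‖am H t u x‖₊ : ℝ≥0∞) :=
            mul_le_mul_left (ENNReal.ofReal_le_ofReal hdb) _
        _ = ENNReal.ofReal ((2 * β / α) ^ β * Real.exp (-(α * R / 2))) *
              ((‖am H t u x‖₊ : ℝ≥0∞) * eps (α * d)) := by
            rw [ENNReal.ofReal_mul (by positivity), eps]
            ring
  calc ∑' x : V, ENNReal.ofReal ((G.dist x u : ℝ) ^ β) * (‖am H t u x‖₊ : ℝ≥0∞) ^ 2
      ≤ ∑' x : V, (ENNReal.ofReal (R ^ β) * (‖am H t u x‖₊ : ℝ≥0∞) ^ 2 +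
          ENNReal.ofReal ((2 * β / α) ^ β * Real.exp (-(α * R / 2))) *
            ((‖am H t u x‖₊ : ℝ≥0∞) * eps (α * G.dist x u))) :=
        ENNReal.tsum_le_tsum hkey
    _ = ENNReal.ofReal (R ^ β) * ∑' x : V, (‖am H t u x‖₊ : ℝ≥0∞) ^ 2 +
          ENNReal.ofReal ((2 * β / α) ^ β * Real.exp (-(α * R / 2))) *
            ∑' x : V, (‖am H t u x‖₊ : ℝ≥0∞) * eps (α * G.dist x u) := by
        rw [ENNReal.tsum_add, ENNReal.tsum_mul_left, ENNReal.tsum_mul_left]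
    _ ≤ ENNReal.ofReal (R ^ β) * 1 +
          ENNReal.ofReal ((2 * β / α) ^ β * Real.exp (-(α * R / 2))) * eps (t * s) := by
        refine add_le_add (mul_le_mul_right (le_of_eq (am_sq_sum hH t u)) _)
          (mul_le_mul_right (weighted_l1_bound hH hG hα hS hrow u ht) _)
    _ ≤ ENNReal.ofReal (((2 * (s + 1) / α) ^ β + (2 * β / α) ^ β) * (1 + t) ^ β) := by
        rw [mul_one, eps, ← ENNReal.ofReal_mul (by positivity), ← ENNReal.ofReal_add
          (by positivity) (by positivity)]
        refine ENNReal.ofReal_le_ofReal ?_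
        have hhalf : α * R / 2 = s * t + 1 := by rw [hR]; field_simp
        have he : Real.exp (-(α * R / 2)) * Real.exp (t * s) ≤ 1 := by
          rw [← Real.exp_add, hhalf]
          refine Real.exp_le_one_iff.2 (by nlinarith)
        have hone : (1 : ℝ) ≤ (1 + t) ^ β :=
          Real.one_le_rpow (by linarith) hβ.le
        have hRb : R ^ β ≤ (2 * (s + 1) / α) ^ β * (1 + t) ^ β := by
          rw [← Real.mul_rpow (by positivity) (by positivity)]
          refine Real.rpow_le_rpow hR0 ?_ hβ.le
          rw [hR, div_mul_eq_mul_div, div_le_div_iff_of_pos_right hα]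
          nlinarith
        calc R ^ β + (2 * β / α) ^ β * Real.exp (-(α * R / 2)) * Real.exp (t * s)
            = R ^ β + (2 * β / α) ^ β * (Real.exp (-(α * R / 2)) * Real.exp (t * s)) := by ring
          _
            ≤ (2 * (s + 1) / α) ^ β * (1 + t) ^ β + (2 * β / α) ^ β * 1 := by
              refine add_le_add hRb (mul_le_mul_of_nonneg_left he (by positivity))
          _ ≤ (2 * (s + 1) / α) ^ β * (1 + t) ^ β + (2 * β / α) ^ β * (1 + t) ^ β := by
              refine add_le_add_right (mul_le_mul_of_nonneg_left hone (by positivity)) _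
          _ = ((2 * (s + 1) / α) ^ β + (2 * β / α) ^ β) * (1 + t) ^ β := by ring

lemma mv_selfAdjoint (v : V → ℝ) (Mv : lp (fun _ : V => ℂ) 2 →L[ℂ] lp (fun _ : V => ℂ) 2)
    (hMv : ∀ (ψ : lp (fun _ : V => ℂ) 2) (x : V), (Mv ψ) x = (v x : ℂ) * ψ x) :
    IsSelfAdjoint Mv := by
  rw [ContinuousLinearMap.isSelfAdjoint_iff_isSymmetric]
  intro ψ φ
  rw [lp.inner_eq_tsum, lp.inner_eq_tsum]
  refine tsum_congr fun i => ?_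
  have h1 := hMv ψ i
  have h2 := hMv φ i
  simp only [RCLike.inner_apply, ContinuousLinearMap.coe_coe]
  rw [h1, h2, map_mul, Complex.conj_ofReal]
  ring

lemma am_cont (u x : V) : Continuous fun t : ℝ => am H t u x := by
  have h1 : (fun t : ℝ => am H t u x) = fun t : ℝ =>
      (inner ℂ (dl x) ((NormedSpace.exp ((-(Complex.I * (t : ℂ))) • H)) (dl u)) : ℂ) := by
    funext t
    rw [inner_dl_apply]
    rfl
  rw [h1]
  have hc : Continuous fun t : ℝ => (-(Complex.I * (t : ℂ))) • H :=
    ((continuous_const.mul Complex.continuous_ofReal).neg).smul continuous_const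
  let +nondep : NormedAlgebra ℚ (lp (fun _ : V => ℂ) 2 →L[ℂ] lp (fun _ : V => ℂ) 2) :=
    .restrictScalars ℚ ℂ _
  have hexp : Continuous fun t : ℝ =>
      NormedSpace.exp ((-(Complex.I * (t : ℂ))) • H) :=
    NormedSpace.exp_continuous.comp hc
  have happ : Continuous fun t : ℝ =>
      (NormedSpace.exp ((-(Complex.I * (t : ℂ))) • H)) (dl u) :=
    (ContinuousLinearMap.apply ℂ (lp (fun _ : V => ℂ) 2) (dl u)).continuous.comp hexp
  exact Continuous.inner continuous_const happ

end aux

set_option maxHeartbeats 2000000 in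
theorem ballistic_upper_bound_moments
    {V : Type*} [Countable V] [DecidableEq V] (G : SimpleGraph V) (hG : G.Connected)
    (A : lp (fun _ : V => ℂ) 2 →L[ℂ] lp (fun _ : V => ℂ) 2) (hA : IsSelfAdjoint A)
    (v : V → ℝ) (hv : ∃ M : ℝ, ∀ x : V, |v x| ≤ M)
    (Mv : lp (fun _ : V => ℂ) 2 →L[ℂ] lp (fun _ : V => ℂ) 2)
    (hMv : ∀ (ψ : lp (fun _ : V => ℂ) 2) (x : V), (Mv ψ) x = (v x : ℂ) * ψ x)
    (H : lp (fun _ : V => ℂ) 2 →L[ℂ] lp (fun _ : V => ℂ) 2) (hH : H = A + Mv)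
    (hgfin : ∃ α : ℝ, 0 < α ∧ (⨆ x : V, ∑' y : V,
      ENNReal.ofReal (‖(inner ℂ (lp.single 2 x (1 : ℂ)) (A (lp.single 2 y (1 : ℂ))) : ℂ)‖ *
        Real.exp (α * G.dist x y))) ≠ ⊤)
    (β : ℝ) (hβ : 0 < β) (u : V) :
    ∃ C : ℝ, ∀ η : ℝ, η ∈ Set.Ioc (0 : ℝ) 1 →
      ∑' x : V, ENNReal.ofReal ((G.dist x u : ℝ) ^ β *
          (2 * η * ∫ t in Set.Ioi (0 : ℝ), Real.exp (-2 * η * t) *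
            ‖(inner ℂ (lp.single 2 x (1 : ℂ))
              ((NormedSpace.exp ((-(Complex.I * (t : ℂ))) • H)) (lp.single 2 u (1 : ℂ))) : ℂ)‖ ^ 2))
        ≤ ENNReal.ofReal (C * η ^ (-β)) := by
  classical
  obtain ⟨α, hα, hgfin⟩ := hgfin
  obtain ⟨M0, hM0⟩ := hv
  set M : ℝ := max M0 0 with hMdef
  have hMnn : (0 : ℝ) ≤ M := le_max_right _ _
  have hMb : ∀ x : V, |v x| ≤ M := fun x => (hM0 x).trans (le_max_left _ _)
  have hMv_sa : IsSelfAdjoint Mv := mv_selfAdjoint v Mv hMv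
  have hH_sa : IsSelfAdjoint H := hH ▸ hA.add hMv_sa
  set gA : ℝ≥0∞ := ⨆ x : V, ∑' y : V, (‖(A (dl y)) x‖₊ : ℝ≥0∞) * eps (α * G.dist x y)
    with hgAdef
  have hgA_ne : gA ≠ ⊤ := by
    have heq : gA = ⨆ x : V, ∑' y : V,
        ENNReal.ofReal (‖(inner ℂ (lp.single 2 x (1 : ℂ)) (A (lp.single 2 y (1 : ℂ))) : ℂ)‖ *
          Real.exp (α * G.dist x y)) := by
      refine iSup_congr fun x => tsum_congr fun y => ?_
      rw [ENNReal.ofReal_mul (norm_nonneg _), ofReal_norm, enorm_eq_nnnorm,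
        show lp.single 2 x (1 : ℂ) = dl x from rfl, show lp.single 2 y (1 : ℂ) = dl y from rfl,
        inner_dl_apply, eps]
    rw [heq]
    exact hgfin
  set S : ℝ≥0∞ := gA + ENNReal.ofReal M with hSdef
  have hS : S ≠ ⊤ := by
    rw [hSdef]
    exact ENNReal.add_ne_top.2 ⟨hgA_ne, ENNReal.ofReal_ne_top⟩
  have hrow : ∀ x : V, ∑' y : V, (‖(H (dl y)) x‖₊ : ℝ≥0∞) * eps (α * G.dist x y) ≤ S := by
    intro x
    have hsplit : ∀ y : V, (‖(H (dl y)) x‖₊ : ℝ≥0∞) * eps (α * G.dist x y) ≤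
        (‖(A (dl y)) x‖₊ : ℝ≥0∞) * eps (α * G.dist x y) +
        (‖(Mv (dl y)) x‖₊ : ℝ≥0∞) * eps (α * G.dist x y) := by
      intro y
      rw [← add_mul]
      refine mul_le_mul_left ?_ _
      have : (H (dl y)) x = (A (dl y)) x + (Mv (dl y)) x := by
        rw [hH]
        rfl
      rw [this]
      exact_mod_cast nnnorm_add_le _ _
    calc ∑' y : V, (‖(H (dl y)) x‖₊ : ℝ≥0∞) * eps (α * G.dist x y)
        ≤ ∑' y : V, ((‖(A (dl y)) x‖₊ : ℝ≥0∞) * eps (α * G.dist x y) +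
            (‖(Mv (dl y)) x‖₊ : ℝ≥0∞) * eps (α * G.dist x y)) := ENNReal.tsum_le_tsum hsplit
      _ = (∑' y : V, (‖(A (dl y)) x‖₊ : ℝ≥0∞) * eps (α * G.dist x y)) +
            ∑' y : V, (‖(Mv (dl y)) x‖₊ : ℝ≥0∞) * eps (α * G.dist x y) := ENNReal.tsum_add
      _ ≤ gA + ENNReal.ofReal M := by
          refine add_le_add (le_iSup (fun x : V => ∑' y : V,
            (‖(A (dl y)) x‖₊ : ℝ≥0∞) * eps (α * G.dist x y)) x) ?_
          have hzero : ∀ y : V, y ≠ x →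
              (‖(Mv (dl y)) x‖₊ : ℝ≥0∞) * eps (α * G.dist x y) = 0 := by
            intro y hy
            have : (Mv (dl y)) x = 0 := by
              rw [hMv, dl, lp.single_apply_ne 2 y _ (Ne.symm hy)]
              simp
            rw [this]
            simp
          rw [tsum_eq_single x hzero]
          have : (Mv (dl x)) x = (v x : ℂ) := by
            rw [hMv, dl, lp.single_apply_self]
            simp
          rw [this, SimpleGraph.dist_self]
          have : eps (α * (0 : ℕ)) = 1 := by
            rw [eps]
            norm_num
          rw [this, mul_one, ← enorm_eq_nnnorm, ← ofReal_norm, Complex.norm_real, Real.norm_eq_abs]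
          exact ENNReal.ofReal_le_ofReal (hMb x)
  set s : ℝ := S.toReal with hsdef
  have hs0 : (0 : ℝ) ≤ s := ENNReal.toReal_nonneg
  set C1 : ℝ := (2 * (s + 1) / α) ^ β + (2 * β / α) ^ β with hC1def
  have hC1nn : (0 : ℝ) ≤ C1 := by positivity
  refine ⟨2 * Real.exp 1 * β ^ β * C1, ?_⟩
  rintro η ⟨hη0, hη1⟩
  set f : V → ℝ → ℝ := fun x t => Real.exp (-2 * η * t) * ‖am H t u x‖ ^ 2 with hfdef
  have hf_cont : ∀ x : V, Continuous (f x) := by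
    intro x
    exact (Real.continuous_exp.comp (by continuity)).mul (((am_cont (H := H) u x).norm).pow 2)
  have hf_nn : ∀ x t, 0 ≤ f x t := fun x t => by positivity
  have hf_le : ∀ x t, f x t ≤ Real.exp (-2 * η * t) := by
    intro x t
    have h1 : ‖am H t u x‖ ^ 2 ≤ 1 := by
      have := am_le_one hH_sa t u x
      nlinarith [norm_nonneg (am H t u x)]
    calc f x t ≤ Real.exp (-2 * η * t) * 1 :=
          mul_le_mul_of_nonneg_left h1 (Real.exp_nonneg _)
      _ = Real.exp (-2 * η * t) := mul_one _
  have hg_int : IntegrableOn (fun t => Real.exp (-2 * η * t)) (Set.Ioi (0 : ℝ)) := by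
    have hfun : (fun t : ℝ => Real.exp (-2 * η * t)) = fun t : ℝ => Real.exp (-(2 * η) * t) := by
      funext t
      congr 1
      ring
    rw [hfun]
    exact exp_neg_integrableOn_Ioi 0 (by linarith : (0 : ℝ) < 2 * η)
  have hf_int : ∀ x : V, IntegrableOn (f x) (Set.Ioi (0 : ℝ)) := by
    intro x
    refine Integrable.mono' hg_int ((hf_cont x).aestronglyMeasurable.restrict) ?_
    refine Filter.Eventually.of_forall fun t => ?_
    rw [Real.norm_eq_abs, _root_.abs_of_nonneg (hf_nn x t)]
    exact hf_le x t
  have hf_ofReal : ∀ x : V, ENNReal.ofReal (∫ t in Set.Ioi (0 : ℝ), f x t) =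
      ∫⁻ t in Set.Ioi (0 : ℝ), ENNReal.ofReal (f x t) := fun x =>
    ofReal_integral_eq_lintegral_ofReal (hf_int x)
      (Filter.Eventually.of_forall fun t => hf_nn x t)
  -- rewrite goal in terms of f
  have hgoal_eq : ∀ x : V,
      ENNReal.ofReal ((G.dist x u : ℝ) ^ β *
        (2 * η * ∫ t in Set.Ioi (0 : ℝ), Real.exp (-2 * η * t) *
          ‖(inner ℂ (lp.single 2 x (1 : ℂ))
            ((NormedSpace.exp ((-(Complex.I * (t : ℂ))) • H)) (lp.single 2 u (1 : ℂ))) : ℂ)‖ ^ 2))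
      = ENNReal.ofReal ((G.dist x u : ℝ) ^ β * (2 * η * ∫ t in Set.Ioi (0 : ℝ), f x t)) := by
    intro x
    congr 2
    refine congrArg (fun z => 2 * η * z) ?_
    refine integral_congr_ae (Filter.Eventually.of_forall fun t => ?_)
    rw [hfdef]
    simp only
    congr 2
    rw [show lp.single 2 x (1 : ℂ) = dl x from rfl, inner_dl_apply]
    rfl
  rw [tsum_congr hgoal_eq]
  -- main chain
  have hd_nn : ∀ x : V, (0 : ℝ) ≤ ((G.dist x u : ℕ) : ℝ) ^ β := fun x => by positivity
  have h2η : (0 : ℝ) ≤ 2 * η := by linarith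
  have hmeas : ∀ x : V, Measurable fun t : ℝ =>
      ENNReal.ofReal (((G.dist x u : ℕ) : ℝ) ^ β) * ENNReal.ofReal (f x t) :=
    fun x => (measurable_const.mul ((hf_cont x).measurable.ennreal_ofReal) : _)
  calc ∑' x : V, ENNReal.ofReal ((G.dist x u : ℝ) ^ β *
        (2 * η * ∫ t in Set.Ioi (0 : ℝ), f x t))
      = ENNReal.ofReal (2 * η) * ∑' x : V, ENNReal.ofReal ((G.dist x u : ℝ) ^ β) *
          ∫⁻ t in Set.Ioi (0 : ℝ), ENNReal.ofReal (f x t) := by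
        rw [← ENNReal.tsum_mul_left]
        refine tsum_congr fun x => ?_
        rw [show (G.dist x u : ℝ) ^ β * (2 * η * ∫ t in Set.Ioi (0 : ℝ), f x t) =
          (2 * η) * ((G.dist x u : ℝ) ^ β * ∫ t in Set.Ioi (0 : ℝ), f x t) from by ring]
        rw [ENNReal.ofReal_mul h2η, ENNReal.ofReal_mul (hd_nn x), hf_ofReal x]
    _ = ENNReal.ofReal (2 * η) * ∑' x : V,
          ∫⁻ t in Set.Ioi (0 : ℝ), ENNReal.ofReal ((G.dist x u : ℝ) ^ β) *
            ENNReal.ofReal (f x t) := by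
        refine congrArg _ (tsum_congr fun x => ?_)
        rw [← lintegral_const_mul' _ _ ENNReal.ofReal_ne_top]
    _ = ENNReal.ofReal (2 * η) * ∫⁻ t in Set.Ioi (0 : ℝ),
          ∑' x : V, ENNReal.ofReal ((G.dist x u : ℝ) ^ β) * ENNReal.ofReal (f x t) := by
        refine congrArg _ ?_
        rw [← lintegral_tsum fun x => (hmeas x).aemeasurable]
    _ ≤ ENNReal.ofReal (2 * η) * ∫⁻ t in Set.Ioi (0 : ℝ),
          ENNReal.ofReal (C1 * (β / η) ^ β * Real.exp 1 * Real.exp (-η * t)) := by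
        refine mul_le_mul_right ?_ _
        refine setLIntegral_mono' measurableSet_Ioi fun t ht => ?_
        have ht0 : (0 : ℝ) ≤ t := le_of_lt ht
        -- pointwise bound
        have hsum_le : ∑' x : V, ENNReal.ofReal ((G.dist x u : ℝ) ^ β) *
            ENNReal.ofReal (f x t) ≤
            ENNReal.ofReal (Real.exp (-2 * η * t)) * ENNReal.ofReal (C1 * (1 + t) ^ β) := by
          have hre : ∀ x : V, ENNReal.ofReal ((G.dist x u : ℝ) ^ β) * ENNReal.ofReal (f x t) =
              ENNReal.ofReal (Real.exp (-2 * η * t)) *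
                (ENNReal.ofReal ((G.dist x u : ℝ) ^ β) * (‖am H t u x‖₊ : ℝ≥0∞) ^ 2) := by
            intro x
            rw [hfdef]
            simp only
            rw [ENNReal.ofReal_mul (Real.exp_nonneg _), ← enorm_eq_nnnorm, ← ofReal_norm,
              ← ENNReal.ofReal_pow (norm_nonneg _)]
            ring
          rw [tsum_congr hre, ENNReal.tsum_mul_left]
          refine mul_le_mul_right ?_ _
          exact moment_bound hH_sa hG hα hS hrow u hβ ht0
        refine hsum_le.trans ?_
        rw [← ENNReal.ofReal_mul (Real.exp_nonneg _)]
        refine ENNReal.ofReal_le_ofReal ?_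
        have hb1 : (1 + t) ^ β ≤ (β / η) ^ β * Real.exp (η * (1 + t)) :=
          rpow_le_exp_aux hβ hη0 (by linarith)
        have hexpmul : Real.exp (-2 * η * t) * Real.exp (η * (1 + t)) ≤
            Real.exp 1 * Real.exp (-η * t) := by
          rw [← Real.exp_add, ← Real.exp_add]
          refine Real.exp_le_exp.2 ?_
          nlinarith
        calc Real.exp (-2 * η * t) * (C1 * (1 + t) ^ β)
            ≤ Real.exp (-2 * η * t) * (C1 * ((β / η) ^ β * Real.exp (η * (1 + t)))) := by
              refine mul_le_mul_of_nonneg_left ?_ (Real.exp_nonneg _)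
              exact mul_le_mul_of_nonneg_left hb1 hC1nn
          _ = C1 * (β / η) ^ β * (Real.exp (-2 * η * t) * Real.exp (η * (1 + t))) := by ring
          _ ≤ C1 * (β / η) ^ β * (Real.exp 1 * Real.exp (-η * t)) := by
              refine mul_le_mul_of_nonneg_left hexpmul (by positivity)
          _ = C1 * (β / η) ^ β * Real.exp 1 * Real.exp (-η * t) := by ring
    _ ≤ ENNReal.ofReal (2 * Real.exp 1 * β ^ β * C1 * η ^ (-β)) := by
        -- compute the integral
        have hint : IntegrableOn (fun t => Real.exp (-η * t)) (Set.Ioi (0 : ℝ)) := by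
          have hfun : (fun t : ℝ => Real.exp (-η * t)) = fun t : ℝ => Real.exp (-η * t) := rfl
          exact (by
            have h := exp_neg_integrableOn_Ioi (a := 0) (b := η) hη0
            rw [show (fun t : ℝ => Real.exp (-η * t)) = fun t : ℝ => Real.exp (-(η * t)) from by
              funext t; congr 1; ring]
            rw [show (fun t : ℝ => Real.exp (-(η * t))) = fun t : ℝ => Real.exp (-η * t) from by
              funext t; congr 1; ring]
            exact h)
        have hval : (∫ t in Set.Ioi (0 : ℝ), Real.exp (-η * t)) = η⁻¹ := by
          have h := integral_comp_mul_left_Ioi (fun x => Real.exp (-x)) 0 hη0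
          simp only [mul_zero] at h
          rw [show (fun t : ℝ => Real.exp (-η * t)) = fun t : ℝ => Real.exp (-(η * t)) from by
            funext t; congr 1; ring]
          rw [h, integral_exp_neg_Ioi]
          simp
        have hlint : ∫⁻ t in Set.Ioi (0 : ℝ),
            ENNReal.ofReal (C1 * (β / η) ^ β * Real.exp 1 * Real.exp (-η * t)) =
            ENNReal.ofReal (C1 * (β / η) ^ β * Real.exp 1) * ENNReal.ofReal η⁻¹ := by
          have hc : ∀ t : ℝ, ENNReal.ofReal (C1 * (β / η) ^ β * Real.exp 1 * Real.exp (-η * t))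
              = ENNReal.ofReal (C1 * (β / η) ^ β * Real.exp 1) *
                ENNReal.ofReal (Real.exp (-η * t)) := fun t =>
            ENNReal.ofReal_mul (by positivity)
          rw [lintegral_congr hc, lintegral_const_mul' _ _ ENNReal.ofReal_ne_top]
          congr 1
          rw [← hval]
          exact (ofReal_integral_eq_lintegral_ofReal hint
            (Filter.Eventually.of_forall fun t => Real.exp_nonneg _)).symm
        rw [hlint, ← ENNReal.ofReal_mul
          (by positivity : (0:ℝ) ≤ C1 * (β / η) ^ β * Real.exp 1), ← ENNReal.ofReal_mul h2η]
        refine ENNReal.ofReal_le_ofReal (le_of_eq ?_)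
        have hηβ : (β / η) ^ β = β ^ β * (η ^ β)⁻¹ := by
          rw [Real.div_rpow hβ.le hη0.le, div_eq_mul_inv]
        have hηnβ : η ^ (-β) = (η ^ β)⁻¹ := Real.rpow_neg hη0.le β
        rw [hηβ, hηnβ]
        have hηne : η ≠ 0 := hη0.ne'
        field_simp
end

section
/- Let (Ω, P) be a probability space and Y : Ω → ℂ a random variable with |Y| > 0 almost surely. For s ∈ ℝ write M(s) := E[|Y|^s]. Let s > 0 and α ≥ 0, and assume M(2+s+α) < ∞ and M(−s) < ∞. Then M(2) ∈ (0, ∞), M(2+s) < ∞, and M(2+s)/M(2) ≤ [ M(2+s+α)^s · M(−s)² ]^{1/(s+α)}. -/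
open MeasureTheory
open scoped ENNReal

/-- Log-convexity of the moment function, via Hölder's inequality. -/
lemma lintegral_rpow_interp {Ω : Type*} [MeasurableSpace Ω] (P : Measure Ω)
    (g : Ω → ℝ≥0∞) (hg : AEMeasurable g P) (hg0 : ∀ᵐ ω ∂P, g ω ≠ 0)
    (hgt : ∀ ω, g ω ≠ ⊤) (a b t : ℝ) (ht0 : 0 < t) (ht1 : t < 1) :
    ∫⁻ ω, g ω ^ (t * a + (1 - t) * b) ∂P ≤
      (∫⁻ ω, g ω ^ a ∂P) ^ t * (∫⁻ ω, g ω ^ b ∂P) ^ (1 - t) := by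
  have ht1' : 0 < 1 - t := by linarith
  have hpq : Real.HolderConjugate (1 / t) (1 / (1 - t)) :=
    Real.holderConjugate_one_div ht0 ht1' (by ring)
  have e1 : ∀ ω, (g ω ^ (t * a)) ^ (1 / t) = g ω ^ a := fun ω => by
    rw [← ENNReal.rpow_mul]; congr 1; field_simp
  have e2 : ∀ ω, (g ω ^ ((1 - t) * b)) ^ (1 / (1 - t)) = g ω ^ b := fun ω => by
    rw [← ENNReal.rpow_mul]; congr 1; field_simp
  calc ∫⁻ ω, g ω ^ (t * a + (1 - t) * b) ∂P
      = ∫⁻ ω, ((fun ω => g ω ^ (t * a)) * fun ω => g ω ^ ((1 - t) * b)) ω ∂P := by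
        refine lintegral_congr_ae (hg0.mono fun ω h => ?_)
        simp only [Pi.mul_apply]
        rw [← ENNReal.rpow_add _ _ h (hgt ω)]
    _ ≤ (∫⁻ ω, (g ω ^ (t * a)) ^ (1 / t) ∂P) ^ (1 / (1 / t)) *
          (∫⁻ ω, (g ω ^ ((1 - t) * b)) ^ (1 / (1 - t)) ∂P) ^ (1 / (1 / (1 - t))) :=
        ENNReal.lintegral_mul_le_Lp_mul_Lq P hpq (hg.pow_const _) (hg.pow_const _)
    _ = (∫⁻ ω, g ω ^ a ∂P) ^ t * (∫⁻ ω, g ω ^ b ∂P) ^ (1 - t) := by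
        simp only [e1, e2, one_div_one_div]

/-- Interpolation bound for moments: for a random variable `Y` with `|Y| > 0`
a.s. and `M(s) := E[|Y|^s]`, if `s > 0`, `α ≥ 0`, `M(2+s+α) < ∞` and `M(−s) < ∞`, then
`M(2) ∈ (0,∞)`, `M(2+s) < ∞` and `M(2+s)/M(2) ≤ [M(2+s+α)^s · M(−s)²]^{1/(s+α)}`. -/
theorem moment_interpolation_bound
    {Ω : Type*} [MeasurableSpace Ω] (P : Measure Ω) [IsProbabilityMeasure P]
    (Y : Ω → ℂ) (hY : AEMeasurable Y P) (hpos : ∀ᵐ ω ∂P, Y ω ≠ 0)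
    (M : ℝ → ℝ≥0∞) (hM : ∀ s : ℝ, M s = ∫⁻ ω, ENNReal.ofReal (‖Y ω‖ ^ s) ∂P)
    (s α : ℝ) (hs : 0 < s) (hα : 0 ≤ α)
    (h1 : M (2 + s + α) ≠ ⊤) (h2 : M (-s) ≠ ⊤) :
    0 < M 2 ∧ M 2 ≠ ⊤ ∧ M (2 + s) ≠ ⊤ ∧
      M (2 + s) / M 2 ≤ (M (2 + s + α) ^ s * M (-s) ^ 2) ^ (1 / (s + α)) := by
  set G : Ω → ℝ≥0∞ := fun ω => ENNReal.ofReal ‖Y ω‖ with hGdef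
  have hG : AEMeasurable G P := ENNReal.measurable_ofReal.comp_aemeasurable hY.norm
  have hnormpos : ∀ᵐ ω ∂P, 0 < ‖Y ω‖ := hpos.mono fun ω h => norm_pos_iff.mpr h
  have hG0 : ∀ᵐ ω ∂P, G ω ≠ 0 := hnormpos.mono fun ω h => by
    simpa [hGdef, ENNReal.ofReal_eq_zero, not_le] using h
  have hGt : ∀ ω, G ω ≠ ⊤ := fun ω => ENNReal.ofReal_ne_top
  -- rewrite M in terms of ENNReal rpow
  have hMG : ∀ t : ℝ, M t = ∫⁻ ω, G ω ^ t ∂P := by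
    intro t
    rw [hM t]
    refine lintegral_congr_ae (hnormpos.mono fun ω h => ?_)
    simp only [hGdef]
    rw [ENNReal.ofReal_rpow_of_pos h]
  -- M 0 = 1
  have hM0 : M 0 = 1 := by
    rw [hMG 0]; simp
  -- finiteness for exponents between -s and 2+s+α
  have hfin : ∀ t : ℝ, -s ≤ t → t ≤ 2 + s + α → M t ≠ ⊤ := by
    intro t hlo hhi
    have hle : M t ≤ M (-s) + M (2 + s + α) := by
      rw [hMG t, hMG (-s), hMG (2 + s + α),
        ← lintegral_add_left' (hG.pow_const _)]
      refine lintegral_mono_ae (hG0.mono fun ω h => ?_)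
      rcases le_or_gt (G ω) 1 with h1' | h1'
      · exact le_trans (ENNReal.rpow_le_rpow_of_exponent_ge h1' hlo) le_self_add
      · exact le_trans (ENNReal.rpow_le_rpow_of_exponent_le h1'.le hhi) le_add_self
    exact ne_top_of_le_ne_top (by simp [h2, h1, ENNReal.add_ne_top]) hle
  have hM2top : M 2 ≠ ⊤ := hfin 2 (by linarith) (by linarith)
  have hM2stop : M (2 + s) ≠ ⊤ := hfin (2 + s) (by linarith) (by linarith)
  -- positivity of M 2
  have hM2pos : 0 < M 2 := by
    rw [pos_iff_ne_zero]
    intro h0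
    rw [hMG 2, lintegral_eq_zero_iff' (hG.pow_const _)] at h0
    have := h0.and hG0
    have : ∀ᵐ ω ∂P, False := this.mono fun ω ⟨hz, hnz⟩ => by
      rw [Pi.zero_apply, ENNReal.rpow_eq_zero_iff] at hz
      rcases hz with ⟨h, _⟩ | ⟨h, hneg⟩
      · exact hnz h
      · exact hGt _ h
    exact (IsProbabilityMeasure.ne_zero P) (by simpa using this)
  refine ⟨hM2pos, hM2top, hM2stop, ?_⟩
  have hsα : 0 < s + α := by linarith
  -- Key inequality B : 1 ≤ M (-s) ^ (2:ℝ) * M 2 ^ s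
  have hB : (1 : ℝ≥0∞) ≤ M (-s) ^ (2 : ℝ) * M 2 ^ s := by
    have t0 : (0:ℝ) < 2 / (s + 2) := by positivity
    have t1 : 2 / (s + 2) < 1 := by rw [div_lt_one (by linarith)]; linarith
    have key := lintegral_rpow_interp P G hG hG0 hGt (-s) 2 (2 / (s + 2)) t0 t1
    have harg : (2 / (s + 2)) * (-s) + (1 - 2 / (s + 2)) * 2 = 0 := by
      field_simp; ring
    rw [harg, ← hMG, ← hMG, ← hMG, hM0] at key
    have key2 := ENNReal.rpow_le_rpow key (by linarith : (0:ℝ) ≤ s + 2)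
    rwa [ENNReal.one_rpow, ENNReal.mul_rpow_of_nonneg _ _ (by linarith : (0:ℝ) ≤ s + 2),
      ← ENNReal.rpow_mul, ← ENNReal.rpow_mul,
      (by field_simp : (2 / (s + 2)) * (s + 2) = 2),
      (by field_simp; ring : (1 - 2 / (s + 2)) * (s + 2) = s)] at key2
  -- Key inequality A : M (2+s) ^ (s+α) ≤ M 2 ^ α * M (2+s+α) ^ s
  have hA : M (2 + s) ^ (s + α) ≤ M 2 ^ α * M (2 + s + α) ^ s := by
    rcases eq_or_lt_of_le hα with hα0 | hα0
    · rw [← hα0]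
      simp [ENNReal.rpow_zero]
    · have t0 : (0:ℝ) < α / (s + α) := by positivity
      have t1 : α / (s + α) < 1 := by rw [div_lt_one hsα]; linarith
      have key := lintegral_rpow_interp P G hG hG0 hGt 2 (2 + s + α) (α / (s + α)) t0 t1
      have harg : (α / (s + α)) * 2 + (1 - α / (s + α)) * (2 + s + α) = 2 + s := by
        field_simp; ring
      rw [harg, ← hMG, ← hMG, ← hMG] at key
      have key2 := ENNReal.rpow_le_rpow key hsα.le
      rwa [ENNReal.mul_rpow_of_nonneg _ _ hsα.le,
        ← ENNReal.rpow_mul, ← ENNReal.rpow_mul,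
        (by field_simp : (α / (s + α)) * (s + α) = α),
        (by field_simp; ring : (1 - α / (s + α)) * (s + α) = s)] at key2
  -- combine
  have hmain : (M (2 + s) / M 2) ^ (s + α) ≤ M (2 + s + α) ^ s * M (-s) ^ (2 : ℝ) := by
    rw [ENNReal.div_rpow_of_nonneg _ _ hsα.le]
    rw [ENNReal.div_le_iff (by simp [ENNReal.rpow_eq_zero_iff, hM2pos.ne', hsα, hM2top])
      (by simp [ENNReal.rpow_eq_top_iff, hM2pos.ne', hsα, hM2top])]
    calc M (2 + s) ^ (s + α) ≤ M 2 ^ α * M (2 + s + α) ^ s := hA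
      _ = (M 2 ^ α * M (2 + s + α) ^ s) * 1 := by rw [mul_one]
      _ ≤ (M 2 ^ α * M (2 + s + α) ^ s) * (M (-s) ^ (2:ℝ) * M 2 ^ s) :=
          mul_le_mul_right hB _
      _ = M (2 + s + α) ^ s * M (-s) ^ (2:ℝ) * (M 2 ^ α * M 2 ^ s) := by ring
      _ = M (2 + s + α) ^ s * M (-s) ^ (2:ℝ) * M 2 ^ (s + α) := by
          rw [← ENNReal.rpow_add _ _ hM2pos.ne' hM2top, add_comm α s]
  have := ENNReal.rpow_le_rpow hmain (by positivity : (0:ℝ) ≤ 1 / (s + α))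
  rw [← ENNReal.rpow_mul, mul_one_div, div_self hsα.ne', ENNReal.rpow_one] at this
  have hcast : M (-s) ^ (2 : ℕ) = M (-s) ^ (2 : ℝ) := by
    rw [← ENNReal.rpow_natCast]; norm_num
  rw [hcast]
  exact this
end

section
/- Let (Ω, P) be a probability space, K a positive integer, and let X : Ω → ℝ, g : Ω → ℝ, and Y₁, …, Y_K : Ω → ℝ be random variables such that each Y_v ≥ 0 almost surely, Y₁, …, Y_K are mutually independent and identically distributed, and X ≥ g² · (Y₁ + ⋯ + Y_K) almost surely. Then for all x > 0 and y > 0: P(X ≤ x) ≤ P(Y₁ ≤ x · y^{-2})^K + P(|g| ≤ y). -/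
open MeasureTheory ProbabilityTheory
open scoped ENNReal

/-- If `X ≥ g²(Y₁ + ⋯ + Y_K)` a.s. with `Y₁,…,Y_K ≥ 0` i.i.d., then
`P(X ≤ x) ≤ P(Y₁ ≤ x y⁻²)^K + P(|g| ≤ y)` for all `x, y > 0`. -/
theorem recursion_distribution_bound
    {Ω : Type*} [MeasurableSpace Ω] (P : Measure Ω) [IsProbabilityMeasure P]
    (K : ℕ) (hK : 0 < K)
    (X g : Ω → ℝ) (Y : Fin K → Ω → ℝ)
    (hYmeas : ∀ v, Measurable (Y v))
    (hYnn : ∀ v, ∀ᵐ ω ∂P, 0 ≤ Y v ω)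
    (hindep : iIndepFun Y P)
    (hident : ∀ v, IdentDistrib (Y v) (Y ⟨0, hK⟩) P P)
    (hdom : ∀ᵐ ω ∂P, g ω ^ 2 * (∑ v, Y v ω) ≤ X ω)
    (x y : ℝ) (hx : 0 < x) (hy : 0 < y) :
    P {ω | X ω ≤ x} ≤ P {ω | Y ⟨0, hK⟩ ω ≤ x * y⁻¹ ^ 2} ^ K + P {ω | |g ω| ≤ y} := by
  set c : ℝ := x * y⁻¹ ^ 2 with hc
  -- a.s. inclusion
  have hnn : ∀ᵐ ω ∂P, ∀ v, 0 ≤ Y v ω := ae_all_iff.2 hYnn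
  have hsub : ∀ᵐ ω ∂P, ω ∈ {ω | X ω ≤ x} →
      ω ∈ (⋂ v, Y v ⁻¹' Set.Iic c) ∪ {ω | |g ω| ≤ y} := by
    filter_upwards [hnn, hdom] with ω h0 hd hX
    by_cases hg : |g ω| ≤ y
    · exact Or.inr hg
    · push_neg at hg
      refine Or.inl (Set.mem_iInter.2 fun v => ?_)
      have hy2 : y ^ 2 ≤ g ω ^ 2 := by
        calc y ^ 2 ≤ |g ω| ^ 2 := by
              apply pow_le_pow_left₀ hy.le (le_of_lt hg)
          _ = g ω ^ 2 := sq_abs _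
      have hgpos : (0:ℝ) < g ω ^ 2 := lt_of_lt_of_le (pow_pos hy 2) hy2
      have hsum : Y v ω ≤ ∑ u, Y u ω :=
        Finset.single_le_sum (fun u _ => h0 u) (Finset.mem_univ v)
      have h1 : g ω ^ 2 * Y v ω ≤ x := by
        calc g ω ^ 2 * Y v ω ≤ g ω ^ 2 * ∑ u, Y u ω := by
              exact mul_le_mul_of_nonneg_left hsum hgpos.le
          _ ≤ X ω := hd
          _ ≤ x := hX
      have : Y v ω ≤ x / g ω ^ 2 := (le_div_iff₀' hgpos).2 h1
      have h2 : x / g ω ^ 2 ≤ x / y ^ 2 :=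
        div_le_div_of_nonneg_left hx.le (pow_pos hy 2) hy2
      have : Y v ω ≤ x / y ^ 2 := this.trans h2
      simpa [hc, div_eq_mul_inv, inv_pow] using this
  have hstep : P {ω | X ω ≤ x} ≤ P ((⋂ v, Y v ⁻¹' Set.Iic c) ∪ {ω | |g ω| ≤ y}) :=
    measure_mono_ae hsub
  have hprod : P (⋂ v, Y v ⁻¹' Set.Iic c) = P {ω | Y ⟨0, hK⟩ ω ≤ c} ^ K := by
    have := (iIndepFun_iff_measure_inter_preimage_eq_mul.1 hindep) Finset.univ
      (sets := fun _ => Set.Iic c) (fun i _ => measurableSet_Iic)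
    rw [show (⋂ v, Y v ⁻¹' Set.Iic c) = ⋂ v ∈ Finset.univ, Y v ⁻¹' Set.Iic c by simp,
      this]
    have heq : ∀ v, P (Y v ⁻¹' Set.Iic c) = P {ω | Y ⟨0, hK⟩ ω ≤ c} := fun v =>
      (hident v).measure_mem_eq measurableSet_Iic
    simp [heq, Finset.prod_const]
  calc P {ω | X ω ≤ x}
      ≤ P ((⋂ v, Y v ⁻¹' Set.Iic c) ∪ {ω | |g ω| ≤ y}) := hstep
    _ ≤ P (⋂ v, Y v ⁻¹' Set.Iic c) + P {ω | |g ω| ≤ y} := measure_union_le _ _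
    _ = P {ω | Y ⟨0, hK⟩ ω ≤ c} ^ K + P {ω | |g ω| ≤ y} := by rw [hprod]
end

section
/- Let (Ω, P) be a probability space, K a positive integer, let V : Ω → ℝ be a random variable whose law is absolutely continuous with respect to Lebesgue measure with essentially bounded density ρ, and let Γ₁, …, Γ_K : Ω → ℂ be random variables which are mutually independent, independent of V, identically distributed, and satisfy Im Γ_v ≥ 0 almost surely. Let ζ ∈ ℂ with Im ζ ≥ 0. Then for all x > 0: P( |V − ζ − (Γ₁ + ⋯ + Γ_K)| ≤ x ) ≤ 2 ‖ρ‖_∞ · x · P( Im Γ₁ ≤ x )^K. -/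
open MeasureTheory ProbabilityTheory
open scoped ENNReal

/-- If `V` has a bounded density `ρ`, `Γ₁,…,Γ_K` are i.i.d. with nonnegative
imaginary parts and independent of `V`, and `Im ζ ≥ 0`, then
`P(|V − ζ − ΣΓ| ≤ x) ≤ 2 ‖ρ‖_∞ x · P(Im Γ₁ ≤ x)^K`. -/
theorem green_function_small_value_bound
    {Ω : Type*} [MeasurableSpace Ω] (P : Measure Ω) [IsProbabilityMeasure P]
    (K : ℕ) (hK : 0 < K)
    (ρ : ℝ → ℝ) (hρmeas : Measurable ρ) (hρnn : ∀ v, 0 ≤ ρ v)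
    (hρbdd : essSup (fun v => ENNReal.ofReal (ρ v)) (volume : Measure ℝ) ≠ ⊤)
    (Vp : Ω → ℝ) (hVp : Measurable Vp)
    (hlaw : P.map Vp = (volume : Measure ℝ).withDensity (fun v => ENNReal.ofReal (ρ v)))
    (Γ : Fin K → Ω → ℂ) (hΓmeas : ∀ v, Measurable (Γ v))
    (hΓim : ∀ v, ∀ᵐ ω ∂P, 0 ≤ (Γ v ω).im)
    (hindep : iIndepFun Γ P)
    (hident : ∀ v, IdentDistrib (Γ v) (Γ ⟨0, hK⟩) P P)
    (hVindep : IndepFun Vp (fun ω => fun v => Γ v ω) P)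
    (ζ : ℂ) (hζ : 0 ≤ ζ.im) (x : ℝ) (hx : 0 < x) :
    P {ω | ‖(Vp ω : ℂ) - ζ - ∑ v, Γ v ω‖ ≤ x}
      ≤ 2 * essSup (fun v => ENNReal.ofReal (ρ v)) (volume : Measure ℝ)
          * ENNReal.ofReal x * P {ω | (Γ ⟨0, hK⟩ ω).im ≤ x} ^ K := by
  classical
  set ρB := essSup (fun v => ENNReal.ofReal (ρ v)) (volume : Measure ℝ) with hρBdef
  set W : Ω → (Fin K → ℂ) := fun ω v => Γ v ω with hWdef
  have hW : Measurable W := measurable_pi_lambda _ hΓmeas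
  set c : (Fin K → ℂ) → ℝ := fun γ => ζ.re + (∑ v, γ v).re with hcdef
  have hcmeas : Measurable c := by
    apply measurable_const.add
    exact Complex.measurable_re.comp (Finset.measurable_sum _ fun v _ => measurable_pi_apply v)
  set A : Set (Fin K → ℂ) := {γ | ∀ v, (γ v).im ≤ x} with hAdef
  have hAmeas : MeasurableSet A := by
    have : A = ⋂ v, {γ : Fin K → ℂ | (γ v).im ≤ x} := by
      ext γ; simp [hAdef]
    rw [this]
    exact MeasurableSet.iInter fun v =>
      measurableSet_le ((Complex.measurable_im.comp (measurable_pi_apply v))) measurable_const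
  set S : Set (ℝ × (Fin K → ℂ)) := {p | |p.1 - c p.2| ≤ x ∧ p.2 ∈ A} with hSdef
  have hSmeas : MeasurableSet S := by
    apply MeasurableSet.inter
    · exact measurableSet_le ((measurable_fst.sub (hcmeas.comp measurable_snd)).abs)
        measurable_const
    · exact hAmeas.preimage measurable_snd
  -- a.e. inclusion of the event in the preimage of S
  have hae : ∀ᵐ ω ∂P, ∀ v, 0 ≤ (Γ v ω).im := ae_all_iff.2 hΓim
  have hsub : ∀ᵐ ω ∂P, ω ∈ {ω | ‖(Vp ω : ℂ) - ζ - ∑ v, Γ v ω‖ ≤ x} →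
      ω ∈ (fun ω => (Vp ω, W ω)) ⁻¹' S := by
    filter_upwards [hae] with ω him hω
    have hnorm : ‖(Vp ω : ℂ) - ζ - ∑ v, Γ v ω‖ ≤ x := hω
    set z : ℂ := (Vp ω : ℂ) - ζ - ∑ v, Γ v ω with hz
    have hzim : z.im = -(ζ.im + ∑ v, (Γ v ω).im) := by
      simp [hz, Complex.im_sum]; ring
    have hzre : z.re = Vp ω - c (W ω) := by
      simp [hz, hcdef, hWdef]; ring
    have him_le : |z.im| ≤ x := le_trans (Complex.abs_im_le_norm z) hnorm
    have hre_le : |z.re| ≤ x := le_trans (Complex.abs_re_le_norm z) hnorm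
    have hsumnn : 0 ≤ ∑ v, (Γ v ω).im := Finset.sum_nonneg fun v _ => him v
    have hsum_le : ∑ v, (Γ v ω).im ≤ x := by
      have : ζ.im + ∑ v, (Γ v ω).im ≤ x := by
        have := abs_le.1 him_le
        rw [hzim] at this
        linarith [this.1]
      linarith
    constructor
    · rw [← hzre]; exact abs_le.2 (abs_le.1 hre_le)
    · intro v
      calc (Γ v ω).im ≤ ∑ v, (Γ v ω).im :=
            Finset.single_le_sum (fun v _ => him v) (Finset.mem_univ v)
        _ ≤ x := hsum_le
  have h1 : P {ω | ‖(Vp ω : ℂ) - ζ - ∑ v, Γ v ω‖ ≤ x}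
      ≤ P ((fun ω => (Vp ω, W ω)) ⁻¹' S) := measure_mono_ae hsub
  -- independence: joint law is product
  haveI : IsProbabilityMeasure (P.map Vp) := Measure.isProbabilityMeasure_map hVp.aemeasurable
  haveI : IsProbabilityMeasure (P.map W) := Measure.isProbabilityMeasure_map hW.aemeasurable
  have hmap : P.map (fun ω => (Vp ω, W ω)) = (P.map Vp).prod (P.map W) :=
    (indepFun_iff_map_prod_eq_prod_map_map hVp.aemeasurable hW.aemeasurable).1 hVindep
  have h2 : P ((fun ω => (Vp ω, W ω)) ⁻¹' S) = ((P.map Vp).prod (P.map W)) S := by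
    rw [← hmap, Measure.map_apply (hVp.prodMk hW) hSmeas]
  -- slice bound
  have hslice : ∀ γ : Fin K → ℂ, (P.map Vp) ((fun v => (v, γ)) ⁻¹' S)
      ≤ A.indicator (fun _ => ρB * ENNReal.ofReal (2 * x)) γ := by
    intro γ
    by_cases hγ : γ ∈ A
    · have hset : (fun v : ℝ => (v, γ)) ⁻¹' S = Set.Icc (c γ - x) (c γ + x) := by
        ext v
        simp only [hSdef, Set.mem_preimage, Set.mem_setOf_eq, Set.mem_Icc, hγ, and_true]
        rw [abs_sub_le_iff]
        constructor <;> intro h <;> constructor <;> linarith [h.1, h.2]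
      rw [hset, Set.indicator_of_mem hγ, hlaw, withDensity_apply _ measurableSet_Icc]
      calc ∫⁻ v in Set.Icc (c γ - x) (c γ + x), ENNReal.ofReal (ρ v)
          ≤ ∫⁻ _ in Set.Icc (c γ - x) (c γ + x), ρB := by
            refine lintegral_mono_ae (ae_restrict_of_ae ?_)
            exact ENNReal.ae_le_essSup (fun v => ENNReal.ofReal (ρ v))
        _ = ρB * volume (Set.Icc (c γ - x) (c γ + x)) := setLIntegral_const _ _
        _ = ρB * ENNReal.ofReal (2 * x) := by
            rw [Real.volume_Icc]; ring_nf
    · have hset : (fun v : ℝ => (v, γ)) ⁻¹' S = ∅ := by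
        ext v; simp [hSdef, hγ]
      rw [hset, Set.indicator_of_notMem hγ]
      simp
  have h3 : ((P.map Vp).prod (P.map W)) S ≤ ρB * ENNReal.ofReal (2 * x) * (P.map W) A := by
    rw [Measure.prod_apply_symm hSmeas]
    calc ∫⁻ γ, (P.map Vp) ((fun v => (v, γ)) ⁻¹' S) ∂(P.map W)
        ≤ ∫⁻ γ, A.indicator (fun _ => ρB * ENNReal.ofReal (2 * x)) γ ∂(P.map W) :=
          lintegral_mono hslice
      _ = ρB * ENNReal.ofReal (2 * x) * (P.map W) A := by
          rw [lintegral_indicator hAmeas, setLIntegral_const]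
  -- product structure for A
  have hB : MeasurableSet {z : ℂ | z.im ≤ x} :=
    measurableSet_le Complex.measurable_im measurable_const
  have h4 : (P.map W) A = P {ω | (Γ ⟨0, hK⟩ ω).im ≤ x} ^ K := by
    rw [Measure.map_apply hW hAmeas]
    have hWA : W ⁻¹' A = ⋂ v ∈ Finset.univ, Γ v ⁻¹' {z : ℂ | z.im ≤ x} := by
      ext ω; simp [hAdef, hWdef]
    rw [hWA, hindep.measure_inter_preimage_eq_mul Finset.univ
      (fun i _ => hB)]
    have : ∀ v : Fin K, P (Γ v ⁻¹' {z : ℂ | z.im ≤ x})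
        = P {ω | (Γ ⟨0, hK⟩ ω).im ≤ x} := fun v => (hident v).measure_mem_eq hB
    rw [Finset.prod_congr rfl fun v _ => this v, Finset.prod_const]
    simp
  calc P {ω | ‖(Vp ω : ℂ) - ζ - ∑ v, Γ v ω‖ ≤ x}
      ≤ ρB * ENNReal.ofReal (2 * x) * (P.map W) A := by
        rw [h2] at h1; exact le_trans h1 h3
    _ = 2 * ρB * ENNReal.ofReal x * P {ω | (Γ ⟨0, hK⟩ ω).im ≤ x} ^ K := by
        rw [h4, ENNReal.ofReal_mul (by norm_num : (0:ℝ) ≤ 2), ENNReal.ofReal_ofNat]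
        ring
end

section
/- Let K ≥ 2 be an integer and C > 0, and let F : (0, ∞) → ℝ be nondecreasing with 0 ≤ F(x) ≤ 1 for all x, F(x) → 0 as x ↓ 0, and F(x²) ≤ 3 · max{ F(x)^K , C √x } for all x ∈ (0, 1]. Then there exist α > 0 and x₀ ∈ (0, 1) such that F(x) ≤ x^α / 3 for all x ∈ (0, x₀]. -/
open Filter
open scoped Topology

/-- A-priori power law: if `F : (0,∞) → [0,1]` is nondecreasing, tends to `0`
at `0⁺`, and satisfies `F(x²) ≤ 3 max{F(x)^K, C√x}` on `(0,1]` for some integer `K ≥ 2` and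
`C > 0`, then there are `α > 0` and `x₀ ∈ (0,1)` with `F(x) ≤ x^α/3` on `(0, x₀]`. -/
theorem apriori_power_law
    (K : ℕ) (hK : 2 ≤ K) (C : ℝ) (hC : 0 < C)
    (F : ℝ → ℝ)
    (hmono : ∀ x y : ℝ, 0 < x → x ≤ y → F x ≤ F y)
    (hF01 : ∀ x : ℝ, 0 < x → F x ∈ Set.Icc (0 : ℝ) 1)
    (hlim : Tendsto F (𝓝[>] (0 : ℝ)) (𝓝 0))
    (hrec : ∀ x : ℝ, x ∈ Set.Ioc (0 : ℝ) 1 →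
      F (x ^ 2) ≤ 3 * max (F x ^ K) (C * Real.sqrt x)) :
    ∃ α : ℝ, 0 < α ∧ ∃ x₀ ∈ Set.Ioo (0 : ℝ) 1,
      ∀ x ∈ Set.Ioc (0 : ℝ) x₀, F x ≤ x ^ α / 3 := by
  -- pick a small threshold δ
  set δ : ℝ := min (1/2) (((9*C)^4)⁻¹) with hδdef
  have hδpos : 0 < δ := lt_min (by norm_num) (by positivity)
  -- pick x₀ ∈ (0, δ) with F x₀ < 1/6
  have h1 : ∀ᶠ x in 𝓝[>] (0:ℝ), F x < 1/6 :=
    Tendsto.eventually_lt_const (by norm_num) hlim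
  have h2 : Set.Ioo (0:ℝ) δ ∈ 𝓝[>] (0:ℝ) :=
    Ioo_mem_nhdsGT_of_mem ⟨le_refl 0, hδpos⟩
  obtain ⟨x₀, hFx₀, hx₀δ⟩ := (h1.and (eventually_of_mem h2 fun x hx => hx)).exists
  have hx₀0 : 0 < x₀ := hx₀δ.1
  have hx₀half : x₀ ≤ 1/2 := le_trans hx₀δ.2.le (min_le_left _ _)
  have hx₀C : x₀ ≤ ((9*C)^4)⁻¹ := le_trans hx₀δ.2.le (min_le_right _ _)
  have hx₀1 : x₀ < 1 := lt_of_le_of_lt hx₀half (by norm_num)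
  have hlogx₀ : Real.log x₀ < 0 := Real.log_neg hx₀0 hx₀1
  -- pick α
  set α : ℝ := min (1/8) (Real.log 2 / (2 * (-Real.log x₀))) with hαdef
  have hα0 : 0 < α := lt_min (by norm_num)
    (div_pos (Real.log_pos one_lt_two) (by linarith))
  have hα8 : α ≤ 1/8 := min_le_left _ _
  -- key : x₀ ^ (2α) ≥ 1/2
  have key : (1:ℝ)/2 ≤ x₀ ^ (2*α) := by
    have hαlog : α ≤ Real.log 2 / (2 * (-Real.log x₀)) := min_le_right _ _
    have h2l : (0:ℝ) < 2 * (-Real.log x₀) := by linarith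
    have : α * (2 * (-Real.log x₀)) ≤ Real.log 2 := by
      rw [← le_div_iff₀ h2l]; exact hαlog
    have hle : -Real.log 2 ≤ Real.log x₀ * (2 * α) := by nlinarith
    have h3 : Real.exp (-Real.log 2) ≤ Real.exp (Real.log x₀ * (2 * α)) :=
      Real.exp_le_exp.mpr hle
    rw [Real.exp_neg, Real.exp_log (by norm_num : (0:ℝ) < 2),
      ← Real.rpow_def_of_pos hx₀0] at h3
    linarith
  -- base estimate on [x₀², x₀]
  have hbase : ∀ x : ℝ, x₀ ^ 2 ≤ x → x ≤ x₀ → F x ≤ x ^ α / 3 := by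
    intro x hx2 hx
    have hx0 : 0 < x := lt_of_lt_of_le (by positivity) hx2
    have hFx : F x ≤ 1/6 := le_trans (hmono x x₀ hx0 hx) hFx₀.le
    have hxα : x₀ ^ (2*α) ≤ x ^ α := by
      have h1 : (x₀ ^ 2 : ℝ) ^ α ≤ x ^ α :=
        Real.rpow_le_rpow (by positivity) hx2 hα0.le
      calc x₀ ^ (2*α) = (x₀ ^ (2:ℝ)) ^ α := by
            rw [← Real.rpow_mul hx₀0.le]
        _ = (x₀ ^ 2 : ℝ) ^ α := by rw [Real.rpow_two]
        _ ≤ x ^ α := h1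
    have : (1:ℝ)/2 ≤ x ^ α := le_trans key hxα
    linarith
  -- inductive step via the recursion
  have hstep : ∀ y : ℝ, 0 < y → y ≤ x₀ → F y ≤ y ^ α / 3 →
      F (y ^ 2) ≤ (y ^ 2 : ℝ) ^ α / 3 := by
    intro y hy0 hyx₀ hFy
    have hy1 : y ≤ 1 := le_trans hyx₀ (by linarith)
    have hFy0 : 0 ≤ F y := (hF01 y hy0).1
    have hrecy := hrec y ⟨hy0, hy1⟩
    have hgoal_eq : (y ^ 2 : ℝ) ^ α = y ^ (2*α) := by
      rw [← Real.rpow_two, ← Real.rpow_mul hy0.le]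
    rw [hgoal_eq]
    -- branch 1
    have hb1 : 3 * F y ^ K ≤ y ^ (2*α) / 3 := by
      have h1 : F y ^ K ≤ (y ^ α / 3) ^ K := pow_le_pow_left₀ hFy0 hFy K
      have h2 : (y ^ α / 3) ^ K = (y ^ α) ^ K / 3 ^ K := div_pow _ _ _
      have h3 : (y ^ α) ^ K = y ^ (α * K) := by
        rw [Real.rpow_mul hy0.le, Real.rpow_natCast]
      have h4 : y ^ (α * (K:ℝ)) ≤ y ^ (2*α) := by
        apply Real.rpow_le_rpow_of_exponent_ge hy0 hy1
        have : (2:ℝ) ≤ (K:ℝ) := by exact_mod_cast hK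
        nlinarith
      have h5 : (9:ℝ) ≤ 3 ^ K := by
        calc (9:ℝ) = 3 ^ 2 := by norm_num
          _ ≤ 3 ^ K := pow_le_pow_right₀ (by norm_num) hK
      have h6 : (y ^ α) ^ K / 3 ^ K ≤ y ^ (2*α) / 9 := by
        apply div_le_div₀ (Real.rpow_nonneg hy0.le _) _ (by norm_num) h5
        rw [h3]; exact h4
      have h7 : (y ^ α / 3) ^ K ≤ y ^ (2*α) / 9 := h2 ▸ h6
      calc 3 * F y ^ K ≤ 3 * (y ^ (2*α) / 9) := by
            have := le_trans h1 h7
            linarith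
        _ = y ^ (2*α) / 3 := by ring
    -- branch 2
    have hb2 : 3 * (C * Real.sqrt y) ≤ y ^ (2*α) / 3 := by
      set t : ℝ := y ^ ((4:ℝ)⁻¹) with htdef
      have ht0 : 0 < t := Real.rpow_pos_of_pos hy0 _
      have htC : t ≤ (9*C)⁻¹ := by
        have h1 : t ≤ (((9*C)^4)⁻¹ : ℝ) ^ ((4:ℝ)⁻¹) :=
          Real.rpow_le_rpow hy0.le (le_trans hyx₀ hx₀C) (by norm_num)
        have h2 : (((9*C)^4)⁻¹ : ℝ) ^ ((4:ℝ)⁻¹) = (9*C)⁻¹ := by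
          rw [Real.inv_rpow (by positivity)]
          congr 1
          have : ((4:ℕ):ℝ)⁻¹ = ((4:ℝ))⁻¹ := by norm_num
          rw [← this, Real.pow_rpow_inv_natCast (by positivity) (by norm_num)]
        rwa [h2] at h1
      have hsqrt : Real.sqrt y = t ^ 2 := by
        rw [Real.sqrt_eq_rpow, htdef, ← Real.rpow_natCast (y ^ ((4:ℝ)⁻¹)) 2,
          ← Real.rpow_mul hy0.le]
        norm_num
      have hty : t ≤ y ^ (2*α) := by
        rw [htdef]
        apply Real.rpow_le_rpow_of_exponent_ge hy0 hy1
        rw [hαdef] at hα8 ⊢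
        linarith
      have h9Ct : 9 * C * t ≤ 1 := by
        have h := mul_le_mul_of_nonneg_left htC (by positivity : (0:ℝ) ≤ 9*C)
        rwa [mul_inv_cancel₀ (by positivity : (9*C : ℝ) ≠ 0)] at h
      have : 9 * C * Real.sqrt y ≤ t := by
        rw [hsqrt]
        calc 9 * C * t ^ 2 = (9 * C * t) * t := by ring
          _ ≤ 1 * t := mul_le_mul_of_nonneg_right h9Ct ht0.le
          _ = t := one_mul t
      linarith [le_trans this hty]
    calc F (y ^ 2) ≤ 3 * max (F y ^ K) (C * Real.sqrt y) := hrecy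
      _ ≤ y ^ (2*α) / 3 := by
          rcases max_cases (F y ^ K) (C * Real.sqrt y) with ⟨h, _⟩ | ⟨h, _⟩ <;>
            rw [h] <;> linarith
  -- main induction
  have main : ∀ n : ℕ, ∀ x : ℝ, 0 < x → x₀ ^ (2^(n+1)) ≤ x → x ≤ x₀ →
      F x ≤ x ^ α / 3 := by
    intro n
    induction n with
    | zero => intro x hx0 hx2 hx; exact hbase x (by simpa using hx2) hx
    | succ n ih =>
      intro x hx0 hx2 hx
      by_cases hc : x₀ ^ 2 ≤ x
      · exact hbase x hc hx
      · push_neg at hc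
        set y : ℝ := Real.sqrt x with hydef
        have hy0 : 0 < y := Real.sqrt_pos.mpr hx0
        have hy2 : y ^ 2 = x := Real.sq_sqrt hx0.le
        have hyx₀ : y ≤ x₀ := by
          have h := Real.sqrt_lt_sqrt hx0.le hc
          rw [Real.sqrt_sq hx₀0.le] at h
          exact h.le
        have hylow : x₀ ^ (2^(n+1)) ≤ y := by
          have h1 : (x₀ ^ (2^(n+1)))^2 ≤ x := by
            rw [← pow_mul]
            calc x₀ ^ (2^(n+1) * 2) = x₀ ^ (2^(n+2)) := by ring_nf
              _ ≤ x := hx2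
          have := Real.sqrt_le_sqrt h1
          rwa [Real.sqrt_sq (by positivity)] at this
        have hFy := ih y hy0 hylow hyx₀
        have := hstep y hy0 hyx₀ hFy
        rwa [hy2] at this
  -- conclude
  refine ⟨α, hα0, x₀, ⟨hx₀0, hx₀1⟩, ?_⟩
  rintro x ⟨hx0, hx⟩
  obtain ⟨m, hm⟩ := exists_pow_lt_of_lt_one hx0 hx₀1
  have hmle : x₀ ^ (2^(m+1)) ≤ x := by
    have h1 : x₀ ^ (2^(m+1)) ≤ x₀ ^ m :=
      pow_le_pow_of_le_one hx₀0.le hx₀1.le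
        (le_trans (Nat.le_of_lt (Nat.lt_two_pow_self (n := m))) (Nat.pow_le_pow_right (by norm_num) (Nat.le_succ m)))
    exact le_trans h1 hm.le
  exact main m x hx0 hmle hx
end

section
/- Let K ≥ 3 be an integer and let F : (0, ∞) → ℝ be nondecreasing with 0 ≤ F(x) ≤ 1 for all x. Assume there exist constants c, C, y₀ > 0 and r > 0 such that F(x) ≤ F(x y^{−2})^K + C ( y · F(c y)^K + y^r ) for all x > 0 and all y ∈ (0, y₀), and assume there exist C₀, x₀, α₀ > 0 such that F(x) ≤ C₀ x^{α₀} for all x ∈ (0, x₀]. Then for every γ ∈ (0, r/3) there exist C₁, x₁ > 0 such that F(x) ≤ C₁ x^{γ} for all x ∈ (0, x₁]. -/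
open Set Real

set_option maxHeartbeats 1600000 in
private lemma bootstrap_step
    (K : ℕ) (hK : 3 ≤ K) (F : ℝ → ℝ)
    (hF01 : ∀ x : ℝ, 0 < x → F x ∈ Set.Icc (0 : ℝ) 1)
    (c C y₀ r : ℝ) (hc : 0 < c) (hC : 0 < C) (hy₀ : 0 < y₀) (hr : 0 < r)
    (hrec : ∀ x : ℝ, 0 < x → ∀ y ∈ Set.Ioo (0 : ℝ) y₀,
      F x ≤ F (x * y⁻¹ ^ 2) ^ K + C * (y * F (c * y) ^ K + y ^ r))
    (γ : ℝ) (hγ0 : 0 < γ) (hγr : γ < r / 3)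
    (α M x₁ : ℝ) (hα : 0 < α) (hαγ : α ≤ γ) (hM : 1 ≤ M) (hx₁ : 0 < x₁)
    (hbd : ∀ x ∈ Set.Ioc (0 : ℝ) x₁, F x ≤ M * x ^ α) :
    ∃ M' x₁' : ℝ, 1 ≤ M' ∧ 0 < x₁' ∧ x₁' ≤ 1 ∧
      ∀ x ∈ Set.Ioc (0 : ℝ) x₁',
        F x ≤ M' * x ^ (min γ (min (3 - 6 * γ / r) (3 * (1 + 3 * γ) / (1 + 9 * γ)) * α)) := by
  set ρ : ℝ := min (3 - 6 * γ / r) (3 * (1 + 3 * γ) / (1 + 9 * γ)) with hρdef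
  have hγr' : 3 * γ < r := by linarith
  have hρ1 : 1 < ρ := by
    apply lt_min
    · have h6 : 6 * γ / r < 2 := by rw [div_lt_iff₀ hr]; linarith
      linarith
    · rw [lt_div_iff₀ (by linarith : (0:ℝ) < 1 + 9 * γ)]; linarith
  set T : ℝ := min γ (ρ * α) with hTdef
  have hρα : 0 < ρ * α := mul_pos (by linarith) hα
  have hT0 : 0 < T := lt_min hγ0 hρα
  have hTγ : T ≤ γ := min_le_left _ _
  have hTρα : T ≤ ρ * α := min_le_right _ _
  set m : ℝ := min r (1 + 3 * α) with hmdef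
  have hm0 : 0 < m := lt_min hr (by linarith)
  set β : ℝ := T / m with hβdef
  have hβ0 : 0 < β := div_pos hT0 hm0
  have hβr : T ≤ β * r := by
    rw [hβdef, div_mul_eq_mul_div, le_div_iff₀ hm0]
    exact mul_le_mul_of_nonneg_left (min_le_left _ _) hT0.le
  have hβ13 : T ≤ β * (1 + 3 * α) := by
    rw [hβdef, div_mul_eq_mul_div, le_div_iff₀ hm0]
    exact mul_le_mul_of_nonneg_left (min_le_right _ _) hT0.le
  have key : T ≤ 3 * α * (1 - 2 * β) := by
    rcases le_total r (1 + 3 * α) with h | h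
    · have hm : m = r := min_eq_left h
      have hβγr : β * r ≤ γ := by
        rw [hβdef, hm, div_mul_cancel₀ _ (ne_of_gt hr)]; exact hTγ
      have h1 : ρ ≤ 3 - 6 * γ / r := min_le_left _ _
      have h6 : 6 * γ / r * r = 6 * γ := div_mul_cancel₀ _ (ne_of_gt hr)
      -- T ≤ ρ α ≤ (3 - 6γ/r) α ≤ 3α(1-2β)
      have h2 : ρ * α * r ≤ (3 - 6 * γ / r) * α * r :=
        mul_le_mul_of_nonneg_right (mul_le_mul_of_nonneg_right h1 hα.le) hr.le
      have h3 : (3 - 6 * γ / r) * α * r = 3 * α * r - 6 * α * γ := by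
        field_simp
      have h4 : 3 * α * r - 6 * α * γ ≤ 3 * α * (1 - 2 * β) * r := by
        have h7 : 6 * α * (β * r) ≤ 6 * α * γ :=
          mul_le_mul_of_nonneg_left hβγr (by positivity : (0:ℝ) ≤ 6 * α)
        linarith [h7]
      have h5 : T * r ≤ 3 * α * (1 - 2 * β) * r := by
        have hTr : T * r ≤ ρ * α * r := mul_le_mul_of_nonneg_right hTρα hr.le
        linarith
      exact le_of_mul_le_mul_right (by linarith) hr
    · have hm : m = 1 + 3 * α := min_eq_right h
      have h13 : (0:ℝ) < 1 + 3 * α := by linarith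
      have hβeq : β * (1 + 3 * α) = T := by
        rw [hβdef, hm, div_mul_cancel₀ _ (ne_of_gt h13)]
      have h1 : ρ ≤ 3 * (1 + 3 * γ) / (1 + 9 * γ) := min_le_right _ _
      have h9γ : (0:ℝ) < 1 + 9 * γ := by linarith
      have h2 : T * (1 + 9 * α) ≤ 3 * α * (1 + 3 * α) := by
        have hTb : T * (1 + 9 * γ) ≤ 3 * (1 + 3 * γ) * α := by
          have h0 := mul_le_mul_of_nonneg_right (hTρα.trans
            (mul_le_mul_of_nonneg_right h1 hα.le)) h9γ.le
          calc T * (1 + 9 * γ) ≤ 3 * (1 + 3 * γ) / (1 + 9 * γ) * α * (1 + 9 * γ) := h0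
            _ = 3 * (1 + 3 * γ) * α := by field_simp; try ring
        have hAB : (1 + 3 * γ) * (1 + 9 * α) ≤ (1 + 3 * α) * (1 + 9 * γ) := by linarith [hαγ]
        have step1 : T * (1 + 9 * α) * (1 + 9 * γ) ≤ 3 * α * (1 + 3 * α) * (1 + 9 * γ) := by
          calc T * (1 + 9 * α) * (1 + 9 * γ) = T * (1 + 9 * γ) * (1 + 9 * α) := by ring
            _ ≤ 3 * (1 + 3 * γ) * α * (1 + 9 * α) :=
                mul_le_mul_of_nonneg_right hTb (by linarith)
            _ = 3 * α * ((1 + 3 * γ) * (1 + 9 * α)) := by ring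
            _ ≤ 3 * α * ((1 + 3 * α) * (1 + 9 * γ)) :=
                mul_le_mul_of_nonneg_left hAB (by linarith)
            _ = 3 * α * (1 + 3 * α) * (1 + 9 * γ) := by ring
        exact le_of_mul_le_mul_right step1 h9γ
      have hβeq6 : 6 * α * (β * (1 + 3 * α)) = 6 * α * T := by rw [hβeq]
      have h3 : T * (1 + 3 * α) ≤ 3 * α * (1 - 2 * β) * (1 + 3 * α) := by
        linarith [h2, hβeq6]
      exact le_of_mul_le_mul_right (by linarith) h13
  have h2β : 0 < 1 - 2 * β := by
    by_contra hcon
    push_neg at hcon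
    have hnp : 3 * α * (1 - 2 * β) ≤ 0 :=
      mul_nonpos_of_nonneg_of_nonpos (by positivity) (by linarith)
    linarith
  set B : ℝ := min (y₀ / 2) (min (x₁ / c) 1) with hBdef
  have hB0 : 0 < B := lt_min (by linarith) (lt_min (div_pos hx₁ hc) one_pos)
  set A₁ : ℝ := (min x₁ 1) ^ (1 / (1 - 2 * β)) with hA₁def
  set A₂ : ℝ := B ^ (1 / β) with hA₂def
  have hmin₁ : 0 < min x₁ 1 := lt_min hx₁ one_pos
  have hA₁0 : 0 < A₁ := rpow_pos_of_pos hmin₁ _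
  have hA₂0 : 0 < A₂ := rpow_pos_of_pos hB0 _
  have hA₁1 : A₁ ≤ 1 := rpow_le_one hmin₁.le (min_le_right _ _) (by positivity)
  have hcα : 0 < c ^ α := rpow_pos_of_pos hc _
  have hM3 : (1:ℝ) ≤ M ^ 3 := one_le_pow₀ hM
  refine ⟨M ^ 3 + C * (M ^ 3 * (c ^ α) ^ 3 + 1), min A₁ A₂, ?_, lt_min hA₁0 hA₂0,
    (min_le_left _ _).trans hA₁1, ?_⟩
  · have hnn : 0 ≤ C * (M ^ 3 * (c ^ α) ^ 3 + 1) := by positivity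
    linarith
  intro x hx
  obtain ⟨hx0, hxle⟩ := hx
  have hx1 : x ≤ 1 := hxle.trans ((min_le_left _ _).trans hA₁1)
  set y : ℝ := x ^ β with hydef
  have hy0 : 0 < y := rpow_pos_of_pos hx0 _
  have hyB : y ≤ B := by
    have hxA₂ : x ≤ A₂ := hxle.trans (min_le_right _ _)
    have := rpow_le_rpow hx0.le hxA₂ hβ0.le
    rwa [hA₂def, ← rpow_mul hB0.le, one_div, inv_mul_cancel₀ (ne_of_gt hβ0), rpow_one] at this
  have hyy₀ : y < y₀ := lt_of_le_of_lt (hyB.trans (min_le_left _ _)) (by linarith)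
  have hxA₁ : x ≤ A₁ := hxle.trans (min_le_left _ _)
  have hx2 : x ^ (1 - 2 * β) ≤ x₁ := by
    have := rpow_le_rpow hx0.le hxA₁ h2β.le
    rw [hA₁def, ← rpow_mul hmin₁.le, one_div, inv_mul_cancel₀ (ne_of_gt h2β), rpow_one] at this
    exact this.trans (min_le_left _ _)
  have hcy : c * y ≤ x₁ := by
    have : y ≤ x₁ / c := hyB.trans ((min_le_right _ _).trans (min_le_left _ _))
    rw [mul_comm]
    exact (le_div_iff₀ hc).mp this
  -- apply the recursion
  have hrec' := hrec x hx0 y ⟨hy0, hyy₀⟩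
  have e1 : x * y⁻¹ ^ 2 = x ^ (1 - 2 * β) := by
    rw [hydef, ← rpow_neg hx0.le, ← rpow_natCast (x ^ (-β)) 2, ← rpow_mul hx0.le,
      show (1 - 2 * β) = 1 + (-β * (2:ℕ)) by push_cast; ring, rpow_add hx0, rpow_one]
  rw [e1] at hrec'
  -- bound the three terms
  have hz0 : 0 < x ^ (1 - 2 * β) := rpow_pos_of_pos hx0 _
  have hFz := hF01 _ hz0
  have hFcy := hF01 (c * y) (by positivity)
  -- term 1
  have t1 : F (x ^ (1 - 2 * β)) ^ K ≤ M ^ 3 * x ^ T := by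
    have hK3 : F (x ^ (1 - 2 * β)) ^ K ≤ F (x ^ (1 - 2 * β)) ^ 3 :=
      pow_le_pow_of_le_one hFz.1 hFz.2 hK
    have hb : F (x ^ (1 - 2 * β)) ≤ M * x ^ ((1 - 2 * β) * α) := by
      have := hbd _ ⟨hz0, hx2⟩
      rwa [← rpow_mul hx0.le] at this
    have h3 : F (x ^ (1 - 2 * β)) ^ 3 ≤ (M * x ^ ((1 - 2 * β) * α)) ^ 3 :=
      pow_le_pow_left₀ hFz.1 hb 3
    have hrw : (M * x ^ ((1 - 2 * β) * α)) ^ 3 = M ^ 3 * x ^ ((1 - 2 * β) * α * 3) := by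
      rw [mul_pow, ← rpow_natCast (x ^ ((1 - 2 * β) * α)) 3, ← rpow_mul hx0.le]
      norm_num
    have hexp : x ^ ((1 - 2 * β) * α * 3) ≤ x ^ T :=
      rpow_le_rpow_of_exponent_ge hx0 hx1 (by linarith [key])
    calc F (x ^ (1 - 2 * β)) ^ K ≤ (M * x ^ ((1 - 2 * β) * α)) ^ 3 := hK3.trans h3
      _ = M ^ 3 * x ^ ((1 - 2 * β) * α * 3) := hrw
      _ ≤ M ^ 3 * x ^ T := by
          exact mul_le_mul_of_nonneg_left hexp (by positivity)
  -- term 2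
  have t2 : y * F (c * y) ^ K ≤ M ^ 3 * (c ^ α) ^ 3 * x ^ T := by
    have hK3 : F (c * y) ^ K ≤ F (c * y) ^ 3 := pow_le_pow_of_le_one hFcy.1 hFcy.2 hK
    have hb : F (c * y) ≤ M * (c ^ α * x ^ (β * α)) := by
      have := hbd _ ⟨by positivity, hcy⟩
      rwa [hydef, mul_rpow hc.le (rpow_nonneg hx0.le _), ← rpow_mul hx0.le] at this
    have h3 : F (c * y) ^ 3 ≤ (M * (c ^ α * x ^ (β * α))) ^ 3 := pow_le_pow_left₀ hFcy.1 hb 3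
    have e2 : (x ^ (β * α)) ^ (3:ℕ) = x ^ (β * α * 3) := by
      rw [← rpow_natCast (x ^ (β * α)) 3, ← rpow_mul hx0.le]; norm_num
    have e3 : x ^ β * x ^ (β * α * 3) = x ^ (β * (1 + 3 * α)) := by
      rw [← rpow_add hx0, show β + β * α * 3 = β * (1 + 3 * α) by ring]
    have hrw : y * (M * (c ^ α * x ^ (β * α))) ^ 3 = M ^ 3 * (c ^ α) ^ 3 * x ^ (β * (1 + 3 * α)) := by
      calc y * (M * (c ^ α * x ^ (β * α))) ^ 3
          = M ^ 3 * (c ^ α) ^ 3 * (x ^ β * (x ^ (β * α)) ^ (3:ℕ)) := by rw [hydef]; ring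
        _ = M ^ 3 * (c ^ α) ^ 3 * (x ^ β * x ^ (β * α * 3)) := by rw [e2]
        _ = M ^ 3 * (c ^ α) ^ 3 * x ^ (β * (1 + 3 * α)) := by rw [e3]
    have hexp : x ^ (β * (1 + 3 * α)) ≤ x ^ T :=
      rpow_le_rpow_of_exponent_ge hx0 hx1 hβ13
    calc y * F (c * y) ^ K ≤ y * (M * (c ^ α * x ^ (β * α))) ^ 3 := by
          apply mul_le_mul_of_nonneg_left (hK3.trans h3) hy0.le
      _ = M ^ 3 * (c ^ α) ^ 3 * x ^ (β * (1 + 3 * α)) := hrw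
      _ ≤ M ^ 3 * (c ^ α) ^ 3 * x ^ T := by
          exact mul_le_mul_of_nonneg_left hexp (by positivity)
  -- term 3
  have t3 : y ^ r ≤ x ^ T := by
    rw [hydef, ← rpow_mul hx0.le]
    exact rpow_le_rpow_of_exponent_ge hx0 hx1 hβr
  have hxT : 0 < x ^ T := rpow_pos_of_pos hx0 _
  calc F x ≤ F (x ^ (1 - 2 * β)) ^ K + C * (y * F (c * y) ^ K + y ^ r) := hrec'
    _ ≤ M ^ 3 * x ^ T + C * (M ^ 3 * (c ^ α) ^ 3 * x ^ T + x ^ T) := by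
        have h23 : y * F (c * y) ^ K + y ^ r ≤ M ^ 3 * (c ^ α) ^ 3 * x ^ T + x ^ T :=
          add_le_add t2 t3
        have h23' := mul_le_mul_of_nonneg_left h23 hC.le
        linarith [t1, h23']
    _ = (M ^ 3 + C * (M ^ 3 * (c ^ α) ^ 3 + 1)) * x ^ T := by ring

/-- Bootstrap for branching number `K ≥ 3`: if a nondecreasing
`F : (0,∞) → [0,1]` satisfies `F(x) ≤ F(x y⁻²)^K + C (y F(cy)^K + y^r)` and an a-priori
power bound `F(x) ≤ C₀ x^{α₀}` near `0`, then for every `γ < r/3` one has `F(x) ≤ C₁ x^γ`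
near `0`. -/
theorem bootstrap_power_law_K_ge_three
    (K : ℕ) (hK : 3 ≤ K)
    (F : ℝ → ℝ)
    (hmono : ∀ x y : ℝ, 0 < x → x ≤ y → F x ≤ F y)
    (hF01 : ∀ x : ℝ, 0 < x → F x ∈ Set.Icc (0 : ℝ) 1)
    (c C y₀ r : ℝ) (hc : 0 < c) (hC : 0 < C) (hy₀ : 0 < y₀) (hr : 0 < r)
    (hrec : ∀ x : ℝ, 0 < x → ∀ y ∈ Set.Ioo (0 : ℝ) y₀,
      F x ≤ F (x * y⁻¹ ^ 2) ^ K + C * (y * F (c * y) ^ K + y ^ r))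
    (C₀ x₀ α₀ : ℝ) (hC₀ : 0 < C₀) (hx₀ : 0 < x₀) (hα₀ : 0 < α₀)
    (hapriori : ∀ x ∈ Set.Ioc (0 : ℝ) x₀, F x ≤ C₀ * x ^ α₀)
    (γ : ℝ) (hγ : γ ∈ Set.Ioo (0 : ℝ) (r / 3)) :
    ∃ C₁ : ℝ, 0 < C₁ ∧ ∃ x₁ : ℝ, 0 < x₁ ∧
      ∀ x ∈ Set.Ioc (0 : ℝ) x₁, F x ≤ C₁ * x ^ γ := by
  obtain ⟨hγ0, hγr⟩ := hγ
  set ρ : ℝ := min (3 - 6 * γ / r) (3 * (1 + 3 * γ) / (1 + 9 * γ)) with hρdef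
  have hγr' : 3 * γ < r := by
    rw [lt_div_iff₀ (by norm_num : (0:ℝ) < 3)] at hγr; linarith
  have hρ1 : 1 < ρ := by
    apply lt_min
    · have h6 : 6 * γ / r < 2 := by rw [div_lt_iff₀ hr]; linarith
      linarith
    · rw [lt_div_iff₀ (by linarith : (0:ℝ) < 1 + 9 * γ)]; linarith
  set α₁ : ℝ := min α₀ γ with hα₁def
  have hα₁0 : 0 < α₁ := lt_min hα₀ hγ0
  have hα₁γ : α₁ ≤ γ := min_le_right _ _
  have base : ∀ x ∈ Set.Ioc (0:ℝ) (min x₀ 1), F x ≤ max C₀ 1 * x ^ α₁ := by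
    rintro x ⟨hx0, hxle⟩
    have hx1 : x ≤ 1 := hxle.trans (min_le_right _ _)
    have h1 := hapriori x ⟨hx0, hxle.trans (min_le_left _ _)⟩
    have h2 : x ^ α₀ ≤ x ^ α₁ :=
      Real.rpow_le_rpow_of_exponent_ge hx0 hx1 (min_le_left _ _)
    calc F x ≤ C₀ * x ^ α₀ := h1
      _ ≤ max C₀ 1 * x ^ α₁ :=
          mul_le_mul (le_max_left _ _) h2 (by positivity) (by positivity)
  have main : ∀ n : ℕ, ∃ M x₁' : ℝ, 1 ≤ M ∧ 0 < x₁' ∧ x₁' ≤ 1 ∧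
      ∀ x ∈ Set.Ioc (0:ℝ) x₁', F x ≤ M * x ^ (min γ (ρ ^ n * α₁)) := by
    intro n
    induction n with
    | zero =>
      refine ⟨max C₀ 1, min x₀ 1, le_max_right _ _, lt_min hx₀ one_pos,
        min_le_right _ _, ?_⟩
      intro x hx
      have hb := base x hx
      rw [pow_zero, one_mul, min_eq_right hα₁γ]
      exact hb
    | succ n ih =>
      obtain ⟨M, x₁', hM, hx₁'0, hx₁'1, hbd⟩ := ih
      set α : ℝ := min γ (ρ ^ n * α₁) with hαdef
      have hαpos : 0 < α := lt_min hγ0 (mul_pos (pow_pos (by linarith) n) hα₁0)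
      obtain ⟨M', x₁'', hM', hx₁''0, hx₁''1, hbd'⟩ :=
        bootstrap_step K hK F hF01 c C y₀ r hc hC hy₀ hr hrec γ hγ0 hγr α M x₁'
          hαpos (min_le_left _ _) hM hx₁'0 hbd
      refine ⟨M', x₁'', hM', hx₁''0, hx₁''1, ?_⟩
      intro x hx
      refine (hbd' x hx).trans ?_
      have hexp : min γ (ρ ^ (n + 1) * α₁) ≤ min γ (ρ * α) := by
        rcases le_total (ρ ^ n * α₁) γ with h | h
        · have hα' : α = ρ ^ n * α₁ := min_eq_right h
          have heq : ρ * α = ρ ^ (n + 1) * α₁ := by rw [hα']; ring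
          rw [heq]
        · have hα' : α = γ := min_eq_left h
          have hle : γ ≤ ρ * α := by
            rw [hα']
            calc γ = 1 * γ := (one_mul γ).symm
              _ ≤ ρ * γ := mul_le_mul_of_nonneg_right hρ1.le hγ0.le
          calc min γ (ρ ^ (n + 1) * α₁) ≤ γ := min_le_left _ _
            _ = min γ (ρ * α) := (min_eq_left hle).symm
      exact mul_le_mul_of_nonneg_left
        (Real.rpow_le_rpow_of_exponent_ge hx.1 (hx.2.trans hx₁''1) hexp)
        (by linarith : (0:ℝ) ≤ M')
  obtain ⟨n, hn⟩ := pow_unbounded_of_one_lt (γ / α₁) hρ1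
  have hγle : γ ≤ ρ ^ n * α₁ := by
    rw [div_lt_iff₀ hα₁0] at hn; linarith
  obtain ⟨M, x₁', hM, hx₁'0, hx₁'1, hbd⟩ := main n
  refine ⟨M, by linarith, x₁', hx₁'0, ?_⟩
  intro x hx
  have hb := hbd x hx
  rwa [min_eq_left hγle] at hb
end

section
/- Let d ≥ 1 be an integer, let η ∈ (0,1], α > 0, C > 0, and let p : ℤ^d → [0, ∞) satisfy Σ_{x ∈ ℤ^d} p(x) = 1 and p(x) ≤ C η^α for every x ∈ ℤ^d. Then there exists b > 0, depending only on C and d, such that whenever b η^{−α/d} ≥ 1: Σ_{x : ‖x‖₁ < b η^{−α/d}} p(x) ≤ 1/2, and consequently for every β > 0: Σ_{x ∈ ℤ^d} ‖x‖₁^β · p(x) ≥ (b^β / 2) · η^{−β α / d}. -/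
open scoped ENNReal

/-- Guarneri's lower bound: if a probability distribution `p` on `ℤ^d`
satisfies `p(x) ≤ C η^α`, then there is `b > 0` depending only on `C` and `d` such that
whenever `b η^{−α/d} ≥ 1`, the mass within ℓ¹-distance `b η^{−α/d}` of the origin is at most
`1/2`, and consequently the `β`-th moment is at least `(b^β/2) η^{−βα/d}`. -/
theorem guarneri_lower_bound
    (d : ℕ) (hd : 1 ≤ d) (C : ℝ) (hC : 0 < C) :
    ∃ b : ℝ, 0 < b ∧
      ∀ η α : ℝ, η ∈ Set.Ioc (0 : ℝ) 1 → 0 < α →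
      ∀ p : (Fin d → ℤ) → ℝ, (∀ x, 0 ≤ p x) → HasSum p 1 →
      (∀ x, p x ≤ C * η ^ α) →
      1 ≤ b * η ^ (-(α / (d : ℝ))) →
      (∑' x : {x : Fin d → ℤ // ((∑ i, (x i).natAbs : ℕ) : ℝ) < b * η ^ (-(α / (d : ℝ)))},
          p x.1 ≤ 1 / 2) ∧
        ∀ β : ℝ, 0 < β →
          ENNReal.ofReal (b ^ β / 2 * η ^ (-(β * α / (d : ℝ))))
            ≤ ∑' x : Fin d → ℤ,
                ENNReal.ofReal (((∑ i, (x i).natAbs : ℕ) : ℝ) ^ β * p x) := by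
  classical
  set X : ℝ := 2 * 5 ^ d * C with hX
  have hXpos : 0 < X := by positivity
  refine ⟨X ^ (-(1/(d:ℝ))), Real.rpow_pos_of_pos hXpos _, ?_⟩
  set b := X ^ (-(1/(d:ℝ))) with hbdef
  have hb : 0 < b := Real.rpow_pos_of_pos hXpos _
  have hdR : (0:ℝ) < d := by exact_mod_cast hd
  have hbd : b ^ d = X⁻¹ := by
    rw [hbdef, ← Real.rpow_natCast (X ^ _) d, ← Real.rpow_mul hXpos.le]
    rw [show -(1/(d:ℝ)) * d = -1 by field_simp]
    exact Real.rpow_neg_one X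
  intro η α hη hα p hp0 hps hpb hR1
  have hηpos : (0:ℝ) < η := hη.1
  set R := b * η ^ (-(α/(d:ℝ))) with hRdef
  have hRpos : 0 < R := mul_pos hb (Real.rpow_pos_of_pos hηpos _)
  set N : ℕ := ⌈R⌉₊ with hN
  set s : Finset (Fin d → ℤ) :=
    Fintype.piFinset fun _ : Fin d => Finset.Icc (-(N:ℤ)) (N:ℤ) with hs
  set t : Finset (Fin d → ℤ) :=
    s.filter (fun x => ((∑ i, (x i).natAbs : ℕ) : ℝ) < R) with ht
  have hiff : ∀ x : Fin d → ℤ,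
      x ∈ t ↔ ((∑ i, (x i).natAbs : ℕ) : ℝ) < R := by
    intro x
    constructor
    · intro hx; exact (Finset.mem_filter.1 hx).2
    · intro hx
      refine Finset.mem_filter.2 ⟨?_, hx⟩
      refine Fintype.mem_piFinset.2 fun i => ?_
      have h1 : (x i).natAbs ≤ ∑ j, (x j).natAbs :=
        Finset.single_le_sum (f := fun j => (x j).natAbs) (fun _ _ => Nat.zero_le _)
          (Finset.mem_univ i)
      have h2 : (((x i).natAbs : ℕ) : ℝ) < R :=
        lt_of_le_of_lt (by exact_mod_cast h1) hx
      have h3 : (x i).natAbs < N := Nat.lt_ceil.2 h2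
      have h4 : (x i).natAbs ≤ N := h3.le
      rw [Finset.mem_Icc]
      omega
  have hscard : (s.card : ℝ) = ((2*N+1 : ℕ) : ℝ) ^ d := by
    have hc : (Finset.Icc (-(N:ℤ)) (N:ℤ)).card = 2*N+1 := by
      rw [Int.card_Icc]; omega
    rw [hs, Fintype.card_piFinset]
    simp [hc]
  -- the key numeric bound
  have hNR : ((2*N+1 : ℕ) : ℝ) ≤ 5 * R := by
    have hceil : (N : ℝ) < R + 1 := Nat.ceil_lt_add_one hRpos.le
    have hR1' : (1:ℝ) ≤ R := hR1
    push_cast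
    nlinarith
  have hpowd : (η ^ (-(α/(d:ℝ)))) ^ d = η ^ (-α) := by
    rw [← Real.rpow_natCast (η ^ _) d, ← Real.rpow_mul hηpos.le]
    congr 1
    field_simp
  have hηα : η ^ (-α) * η ^ α = 1 := by
    rw [← Real.rpow_add hηpos]; simp
  have hmass : ∑ x ∈ t, p x ≤ 1/2 := by
    calc ∑ x ∈ t, p x ≤ t.card • (C * η ^ α) :=
          Finset.sum_le_card_nsmul _ _ _ (fun x _ => hpb x)
      _ = (t.card : ℝ) * (C * η ^ α) := by rw [nsmul_eq_mul]
      _ ≤ (s.card : ℝ) * (C * η ^ α) := by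
          have : t.card ≤ s.card := Finset.card_filter_le _ _
          have hnn : 0 ≤ C * η ^ α := by positivity
          exact mul_le_mul_of_nonneg_right (by exact_mod_cast this) hnn
      _ ≤ (5 * R) ^ d * (C * η ^ α) := by
          have hnn : 0 ≤ C * η ^ α := by positivity
          refine mul_le_mul_of_nonneg_right ?_ hnn
          rw [hscard]
          exact pow_le_pow_left₀ (by positivity) hNR d
      _ = 1/2 := by
          rw [hRdef, mul_pow, mul_pow, hbd, hpowd]
          have h5 : (5:ℝ) ^ d ≠ 0 := by positivity
          have : (5:ℝ)^d * (X⁻¹ * η ^ (-α)) * (C * η ^ α)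
              = (5:ℝ)^d * X⁻¹ * C * (η ^ (-α) * η ^ α) := by ring
          rw [this, hηα, mul_one, hX]
          field_simp
  have hsub1 : (∑' x : {x : Fin d → ℤ // ((∑ i, (x i).natAbs : ℕ) : ℝ) < R}, p x.1)
      = ∑ x ∈ t, p x := by
    calc (∑' x : {x : Fin d → ℤ // ((∑ i, (x i).natAbs : ℕ) : ℝ) < R}, p x.1)
        = ∑' y : {x // x ∈ t}, p y.1 := by exact Equiv.tsum_eq (Equiv.subtypeEquivRight (fun x => (hiff x).symm)) fun y => p y.1
      _ = ∑ x ∈ t, p x := Finset.tsum_subtype' t p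
  refine ⟨by rw [hsub1]; exact hmass, ?_⟩
  intro β hβ
  set S : Set (Fin d → ℤ) := {x | ((∑ i, (x i).natAbs : ℕ) : ℝ) < R} with hS
  set g : (Fin d → ℤ) → ℝ≥0∞ := fun x => ENNReal.ofReal (p x) with hg
  have hsum1 : ∑' x, g x = 1 := by
    rw [hg, ← ENNReal.ofReal_tsum_of_nonneg hp0 hps.summable, hps.tsum_eq,
      ENNReal.ofReal_one]
  have hSsum : (∑' x : S, g x.1) ≤ ENNReal.ofReal (1/2) := by
    have : (∑' x : S, g x.1) = ∑ x ∈ t, g x := by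
      refine Eq.trans ?_ (Finset.tsum_subtype' t g)
      exact Equiv.tsum_eq (Equiv.subtypeEquivRight (fun x => (hiff x).symm)) fun y => g y.1
    rw [this, hg]
    rw [← ENNReal.ofReal_sum_of_nonneg (fun x _ => hp0 x)]
    exact ENNReal.ofReal_le_ofReal hmass
  have hhalf : (1:ℝ≥0∞) = ENNReal.ofReal (1/2) + ENNReal.ofReal (1/2) := by
    rw [← ENNReal.ofReal_add (by norm_num) (by norm_num)]; norm_num
  have hsplit : (∑' x : S, g x.1) + ∑' x : ↑Sᶜ, g x.1 = 1 := by
    rw [Summable.tsum_add_tsum_compl (s := S) ENNReal.summable ENNReal.summable, hsum1]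
  have hcompl : ENNReal.ofReal (1/2) ≤ ∑' x : ↑Sᶜ, g x.1 := by
    by_contra h
    push_neg at h
    have := hsplit
    have hlt : (∑' x : S, g x.1) + ∑' x : ↑Sᶜ, g x.1
        < ENNReal.ofReal (1/2) + ENNReal.ofReal (1/2) :=
      ENNReal.add_lt_add_of_le_of_lt (ne_top_of_le_ne_top ENNReal.ofReal_ne_top hSsum)
        hSsum h
    rw [hsplit, ← hhalf] at hlt
    exact lt_irrefl _ hlt
  have hRβ : 0 ≤ R ^ β := Real.rpow_nonneg hRpos.le β
  have hstep : ∑' x, (Sᶜ).indicator (fun x => ENNReal.ofReal (R ^ β * p x)) x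
      ≤ ∑' x : Fin d → ℤ,
          ENNReal.ofReal (((∑ i, (x i).natAbs : ℕ) : ℝ) ^ β * p x) := by
    refine ENNReal.tsum_le_tsum fun x => ?_
    by_cases hx : x ∈ Sᶜ
    · rw [Set.indicator_of_mem hx]
      refine ENNReal.ofReal_le_ofReal ?_
      refine mul_le_mul_of_nonneg_right ?_ (hp0 x)
      have hxR : R ≤ ((∑ i, (x i).natAbs : ℕ) : ℝ) := le_of_not_gt hx
      exact Real.rpow_le_rpow hRpos.le hxR hβ.le
    · rw [Set.indicator_of_notMem hx]; exact zero_le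
  have hlhs : ENNReal.ofReal (b ^ β / 2 * η ^ (-(β * α / (d : ℝ))))
      = ENNReal.ofReal (R ^ β) * ENNReal.ofReal (1/2) := by
    rw [← ENNReal.ofReal_mul hRβ]
    congr 1
    rw [hRdef, Real.mul_rpow hb.le (Real.rpow_nonneg hηpos.le _),
      ← Real.rpow_mul hηpos.le]
    rw [show -(α/(d:ℝ)) * β = -(β * α / (d:ℝ)) by ring]
    ring
  calc ENNReal.ofReal (b ^ β / 2 * η ^ (-(β * α / (d : ℝ))))
      = ENNReal.ofReal (R ^ β) * ENNReal.ofReal (1/2) := hlhs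
    _ ≤ ENNReal.ofReal (R ^ β) * ∑' x : ↑Sᶜ, g x.1 :=
        mul_le_mul_right hcompl _
    _ = ∑' x : ↑Sᶜ, ENNReal.ofReal (R ^ β * p x.1) := by
        rw [← ENNReal.tsum_mul_left]
        refine tsum_congr fun x => ?_
        rw [hg, ← ENNReal.ofReal_mul hRβ]
    _ = ∑' x, (Sᶜ).indicator (fun x => ENNReal.ofReal (R ^ β * p x)) x := by
        exact tsum_subtype (Sᶜ) (fun x => ENNReal.ofReal (R ^ β * p x))
    _ ≤ _ := hstep
end
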